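/- arXiv:1603.02204 — 6 statements merged into one kernel-verified Lean document; each statement's English description precedes it below -/
import Mathlib

section
/- Let 𝓡 = 𝓡(ℝ,𝔽) with 𝔽 an algebraically closed field, and let A, B ∈ 𝓡̄^{n×n} be ELT matrices with A ⊨ B entrywise. Then det A ⊨ det B. -/
/-- The ELT algebra `𝓡(F, L)` together with an adjoined `−∞` element:
`bot` represents `−∞`, and `elt a ℓ` represents the element `[ℓ]a`
with tangible value `a ∈ F` and layer `ℓ ∈ L`.  Thus `ELT F L` plays the
role of `𝓡̄ = 𝓡 ∪ {−∞}`. -/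
inductive ELT (F : Type) (L : Type) : Type
  | bot : ELT F L
  | elt : F → L → ELT F L

namespace ELT

variable {F : Type} {L : Type}

/-- The sorting map `s : 𝓡̄ → L`, with `s (−∞) = 0`. -/
def s [Zero L] : ELT F L → L
  | bot => 0
  | elt _ ℓ => ℓ

/-- The tangible value `t : 𝓡̄ → F ∪ {−∞}`, with `t (−∞) = −∞ = ⊥`. -/
def t : ELT F L → WithBot F
  | bot => ⊥
  | elt a _ => (a : WithBot F)

/-- `−∞` is the additive identity of `𝓡̄`, so we register it as the zero. -/
instance : Zero (ELT F L) := ⟨bot⟩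

/-- The multiplicative identity `[1]0`. -/
instance [Zero F] [One L] : One (ELT F L) := ⟨elt 0 1⟩

/-- Addition on `𝓡̄`: the element with larger tangible value wins, and layers
add in case of a tie; `−∞` is neutral. -/
instance [LinearOrder F] [Add L] : Add (ELT F L) where
  add x y :=
    match x, y with
    | bot, y => y
    | x, bot => x
    | elt a ℓ, elt b k => if a < b then elt b k else if b < a then elt a ℓ else elt a (ℓ + k)

/-- Multiplication on `𝓡̄`: tangible values add, layers multiply; `−∞` is absorbing. -/
instance [Add F] [Mul L] : Mul (ELT F L) where
  mul x y :=
    match x, y with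
    | bot, _ => bot
    | _, bot => bot
    | elt a ℓ, elt b k => elt (a + b) (ℓ * k)

/-- The surpassing relation `x ⊨ y` on `𝓡̄`: `x = y + z` for some zero-layered `z`. -/
def Surpass [LinearOrder F] [Add L] [Zero L] (x y : ELT F L) : Prop :=
  ∃ z : ELT F L, s z = 0 ∧ x = y + z

/-- `x ∈ 𝓡^× ∪ {−∞}`: either `x = −∞` or `x` has nonzero layer. -/
def TangibleOrBot [Zero L] (x : ELT F L) : Prop :=
  x = bot ∨ s x ≠ 0

/-- The sum of a finite family of elements of `𝓡̄`. -/
def fsum [LinearOrder F] [Add L] {m : ℕ} (f : Fin m → ELT F L) : ELT F L :=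
  (List.ofFn f).sum

/-- A finite family of vectors in `𝓡̄ⁿ` is linearly dependent if there are
coefficients in `𝓡^× ∪ {−∞}`, not all `−∞`, such that the corresponding linear
combination is zero-layered in every coordinate (equivalently, some subfamily
admits a combination with all coefficients in `𝓡^×` which is zero-layered
everywhere). -/
def LinDep [LinearOrder F] [Zero L] [Add L] [Add F] [Mul L] {m n : ℕ}
    (v : Fin m → Fin n → ELT F L) : Prop :=
  ∃ a : Fin m → ELT F L, (∀ i, TangibleOrBot (a i)) ∧ (∃ i, a i ≠ bot) ∧
    ∀ j : Fin n, s (fsum fun i => a i * v i j) = 0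

/-- The ELT determinant of a square ELT matrix. -/
noncomputable def det {n : ℕ} [LinearOrder F] [Add F] [Zero F] [Ring L]
    (A : Matrix (Fin n) (Fin n) (ELT F L)) : ELT F L :=
  ((Finset.univ : Finset (Equiv.Perm (Fin n))).toList.map fun σ =>
    elt 0 (((Equiv.Perm.sign σ : ℤˣ) : ℤ) : L) * (List.ofFn fun i => A i (σ i)).prod).sum

/-- The EL tropicalization of a Hahn (generalized Puiseux) series: `0 ↦ −∞`,
and a nonzero series with leading monomial `ℓ tᵃ` goes to `[ℓ](−a)`. -/
noncomputable def ELTrop [AddCommGroup F] [LinearOrder F] [IsOrderedAddMonoid F] [Zero L] (x : HahnSeries F L) : ELT F L :=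
  open scoped Classical in
  if x = 0 then bot else elt (-x.order) (x.coeff x.order)

end ELT


namespace ELTAux

open ELT

variable {L : Type} [CommRing L]

lemma bot_add (x : ELT ℝ L) : bot + x = x := by cases x <;> rfl
lemma add_bot (x : ELT ℝ L) : x + bot = x := by cases x <;> rfl
lemma elt_add_elt (a b : ℝ) (ℓ k : L) :
    (elt a ℓ : ELT ℝ L) + elt b k =
      if a < b then elt b k else if b < a then elt a ℓ else elt a (ℓ + k) := rfl
lemma bot_mul (x : ELT ℝ L) : bot * x = bot := by cases x <;> rfl
lemma mul_bot (x : ELT ℝ L) : x * bot = bot := by cases x <;> rfl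
lemma elt_mul_elt (a b : ℝ) (ℓ k : L) :
    (elt a ℓ : ELT ℝ L) * elt b k = elt (a + b) (ℓ * k) := rfl

lemma addc (x y : ELT ℝ L) : x + y = y + x := by
  cases x with
  | bot => rw [bot_add, add_bot]
  | elt a ℓ =>
    cases y with
    | bot => rw [bot_add, add_bot]
    | elt b k =>
      rw [elt_add_elt, elt_add_elt]
      split_ifs <;> first
        | rfl
        | (exfalso; linarith)
        | (congr 1 <;> first | linarith | ring)

lemma adda (x y z : ELT ℝ L) : x + y + z = x + (y + z) := by
  cases x with
  | bot => rw [bot_add, bot_add]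
  | elt a ℓ =>
    cases y with
    | bot => rw [add_bot, bot_add]
    | elt b k =>
      cases z with
      | bot => rw [add_bot, add_bot]
      | elt c m =>
        simp only [elt_add_elt]
        split_ifs <;> first
          | rfl
          | (exfalso; linarith)
          | (simp only [elt_add_elt]; split_ifs <;> first
              | rfl
              | (exfalso; linarith)
              | (congr 1 <;> first | linarith | ring))

lemma mulc (x y : ELT ℝ L) : x * y = y * x := by
  cases x <;> cases y <;>
    simp only [bot_mul, mul_bot, elt_mul_elt]
  congr 1
  · ring
  · ring

lemma ldistrib (x y z : ELT ℝ L) : x * (y + z) = x * y + x * z := by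
  cases x with
  | bot => rw [bot_mul, bot_mul, bot_mul, bot_add]
  | elt a ℓ =>
    cases y with
    | bot => rw [bot_add, mul_bot, bot_add]
    | elt b k =>
      cases z with
      | bot => rw [add_bot, mul_bot, add_bot]
      | elt c m =>
        simp only [elt_add_elt, elt_mul_elt]
        split_ifs <;> first
          | rfl
          | (exfalso; linarith)
          | (simp only [elt_mul_elt]; congr 1 <;> first | linarith | ring)

lemma rdistrib (x y z : ELT ℝ L) : (x + y) * z = x * z + y * z := by
  rw [mulc, ldistrib, mulc z x, mulc z y]

lemma s_mul (x y : ELT ℝ L) : s (x * y) = s x * s y := by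
  cases x <;> cases y <;> simp [s, bot_mul, mul_bot, elt_mul_elt]

lemma s_add_zero {x y : ELT ℝ L} (hx : s x = 0) (hy : s y = 0) : s (x + y) = 0 := by
  cases x with
  | bot => rwa [bot_add]
  | elt a ℓ =>
    cases y with
    | bot => rwa [add_bot]
    | elt b k =>
      simp only [s] at hx hy
      rw [elt_add_elt]
      split_ifs <;> simp [s, hx, hy]

lemma surpass_refl (x : ELT ℝ L) : Surpass x x :=
  ⟨bot, rfl, (add_bot x).symm⟩

lemma add_add_add_comm (a b c d : ELT ℝ L) : (a + b) + (c + d) = (a + c) + (b + d) := by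
  rw [adda, ← adda b c d, addc b c, adda c b d, ← adda]

lemma surpass_add {x y x' y' : ELT ℝ L} (h : Surpass x y) (h' : Surpass x' y') :
    Surpass (x + x') (y + y') := by
  obtain ⟨z, hz, rfl⟩ := h
  obtain ⟨z', hz', rfl⟩ := h'
  exact ⟨z + z', s_add_zero hz hz', add_add_add_comm y z y' z'⟩

lemma surpass_mul {x y x' y' : ELT ℝ L} (h : Surpass x y) (h' : Surpass x' y') :
    Surpass (x * x') (y * y') := by
  obtain ⟨z, hz, rfl⟩ := h
  obtain ⟨z', hz', rfl⟩ := h'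
  refine ⟨y * z' + (z * y' + z * z'), ?_, ?_⟩
  · apply s_add_zero
    · rw [s_mul, hz', mul_zero]
    · apply s_add_zero <;> rw [s_mul, hz, zero_mul]
  · rw [rdistrib, ldistrib, ldistrib, adda]

lemma surpass_sum_map {α : Type*} (l : List α) (f g : α → ELT ℝ L)
    (h : ∀ a, Surpass (f a) (g a)) : Surpass (l.map f).sum (l.map g).sum := by
  induction l with
  | nil => exact surpass_refl _
  | cons a l ih =>
    simp only [List.map_cons, List.sum_cons]
    exact surpass_add (h a) ih

lemma surpass_prod_map {α : Type*} (l : List α) (f g : α → ELT ℝ L)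
    (h : ∀ a, Surpass (f a) (g a)) : Surpass (l.map f).prod (l.map g).prod := by
  induction l with
  | nil => exact surpass_refl _
  | cons a l ih =>
    simp only [List.map_cons, List.prod_cons]
    exact surpass_mul (h a) ih

end ELTAux

/-- If `A ⊨ B` entrywise, then `det A ⊨ det B`. -/
theorem stmt3 {𝔽 : Type} [Field 𝔽] [IsAlgClosed 𝔽] {n : ℕ}
    (A B : Matrix (Fin n) (Fin n) (ELT ℝ 𝔽))
    (h : ∀ i j, ELT.Surpass (A i j) (B i j)) :
    ELT.Surpass (ELT.det A) (ELT.det B) := by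
  unfold ELT.det
  apply ELTAux.surpass_sum_map
  intro σ
  apply ELTAux.surpass_mul (ELTAux.surpass_refl _)
  rw [List.ofFn_eq_map, List.ofFn_eq_map]
  exact ELTAux.surpass_prod_map _ _ _ fun i => h i (σ i)
end

section
/- Let 𝓡 = 𝓡(ℝ,𝔽) with 𝔽 an algebraically closed field, and let A ∈ 𝓡̄^{n×n} be a singular ELT matrix. Then there exists a singular ELT matrix B with all entries in 𝓡^× ∪ {−∞} such that A ⊨ B entrywise. -/
set_option linter.unusedSectionVars false
namespace Dev
variable {𝔽 : Type} [Field 𝔽]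

open ELT

@[simp] lemma bot_add (x : ELT ℝ 𝔽) : bot + x = x := by cases x <;> rfl
@[simp] lemma add_bot (x : ELT ℝ 𝔽) : x + bot = x := by cases x <;> rfl
lemma elt_add_elt (a b : ℝ) (ℓ k : 𝔽) : elt a ℓ + elt b k =
    if a < b then elt b k else if b < a then elt a ℓ else elt a (ℓ + k) := rfl
@[simp] lemma elt_add_lt {a b : ℝ} (h : a < b) (ℓ k : 𝔽) : elt a ℓ + elt b k = elt b k := by
  rw [elt_add_elt, if_pos h]
@[simp] lemma elt_add_gt {a b : ℝ} (h : b < a) (ℓ k : 𝔽) : elt a ℓ + elt b k = elt a ℓ := by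
  rw [elt_add_elt, if_neg (by linarith), if_pos h]
@[simp] lemma elt_add_same (a : ℝ) (ℓ k : 𝔽) : elt a ℓ + elt a k = elt a (ℓ + k) := by
  rw [elt_add_elt, if_neg (lt_irrefl a), if_neg (lt_irrefl a)]
@[simp] lemma bot_mul (x : ELT ℝ 𝔽) : bot * x = bot := by cases x <;> rfl
@[simp] lemma mul_bot (x : ELT ℝ 𝔽) : x * bot = bot := by cases x <;> rfl
@[simp] lemma elt_mul_elt (a b : ℝ) (ℓ k : 𝔽) : elt a ℓ * elt b k = elt (a + b) (ℓ * k) := rfl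
lemma zero_def : (0 : ELT ℝ 𝔽) = bot := rfl
lemma one_def : (1 : ELT ℝ 𝔽) = elt 0 1 := rfl
@[simp] lemma s_bot : s (bot : ELT ℝ 𝔽) = 0 := rfl
@[simp] lemma s_elt (a : ℝ) (ℓ : 𝔽) : s (elt a ℓ) = ℓ := rfl

lemma my_add_assoc (x y z : ELT ℝ 𝔽) : x + y + z = x + (y + z) := by
  rcases x with _ | ⟨a, l⟩ <;> rcases y with _ | ⟨b, m⟩ <;> rcases z with _ | ⟨c, k⟩ <;>
    try simp only [bot_add, add_bot]
  rcases lt_trichotomy a b with h1 | h1 | h1 <;> rcases lt_trichotomy b c with h2 | h2 | h2 <;>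
    rcases lt_trichotomy a c with h3 | h3 | h3 <;>
    first
      | linarith
      | simp [*, elt_add_lt, elt_add_gt, elt_add_same, add_assoc]

lemma my_add_comm (x y : ELT ℝ 𝔽) : x + y = y + x := by
  rcases x with _ | ⟨a, l⟩ <;> rcases y with _ | ⟨b, m⟩ <;> try simp only [bot_add, add_bot]
  rcases lt_trichotomy a b with h | h | h <;>
    simp [*, elt_add_lt, elt_add_gt, elt_add_same, add_comm]

lemma my_left_distrib (x y z : ELT ℝ 𝔽) : x * (y + z) = x * y + x * z := by
  rcases x with _ | ⟨a, l⟩ <;> rcases y with _ | ⟨b, m⟩ <;> rcases z with _ | ⟨c, k⟩ <;>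
    try simp only [bot_add, add_bot, bot_mul, mul_bot, elt_mul_elt]
  rcases lt_trichotomy b c with h | h | h <;>
    simp [*, elt_add_lt, elt_add_gt, elt_add_same, mul_add]

lemma my_mul_comm (u v : ELT ℝ 𝔽) : u * v = v * u := by
  rcases u with _ | ⟨a, l⟩ <;> rcases v with _ | ⟨b, m⟩ <;> simp [mul_comm, add_comm]

noncomputable instance instCS : CommSemiring (ELT ℝ 𝔽) where
  add_assoc := my_add_assoc
  add_comm := my_add_comm
  zero_add x := by cases x <;> rfl
  add_zero x := by cases x <;> rfl
  mul_assoc x y z := by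
    rcases x with _ | ⟨a, l⟩ <;> rcases y with _ | ⟨b, m⟩ <;> rcases z with _ | ⟨c, k⟩ <;>
      simp [mul_assoc, add_assoc]
  mul_comm := my_mul_comm
  one_mul x := by rcases x with _ | ⟨a, l⟩ <;> simp [one_def]
  mul_one x := by rcases x with _ | ⟨a, l⟩ <;> simp [one_def]
  zero_mul x := by rcases x with _ | ⟨a, l⟩ <;> rfl
  mul_zero x := by rcases x with _ | ⟨a, l⟩ <;> rfl
  left_distrib := my_left_distrib
  right_distrib x y z := by
    rw [my_mul_comm (x + y) z, my_left_distrib, my_mul_comm z x, my_mul_comm z y]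
  nsmul := nsmulRec
  npow := npowRec

end Dev
namespace Dev
variable {𝔽 : Type} [Field 𝔽] {n : ℕ}
open ELT Finset

lemma det_eq_sum (A : Matrix (Fin n) (Fin n) (ELT ℝ 𝔽)) :
    det A = ∑ σ : Equiv.Perm (Fin n),
      elt 0 (((Equiv.Perm.sign σ : ℤˣ) : ℤ) : 𝔽) * ∏ i, A i (σ i) := by
  unfold ELT.det
  rw [Finset.sum_map_toList]
  congr 1; funext σ; rw [List.prod_ofFn]

def upd (A : Matrix (Fin n) (Fin n) (ELT ℝ 𝔽)) (i j : Fin n) (x : ELT ℝ 𝔽) :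
    Matrix (Fin n) (Fin n) (ELT ℝ 𝔽) :=
  fun k l => if k = i ∧ l = j then x else A k l

lemma upd_self (A : Matrix (Fin n) (Fin n) (ELT ℝ 𝔽)) (i j : Fin n) :
    upd A i j (A i j) = A := by
  funext k l; unfold upd; split_ifs with h
  · rw [h.1, h.2]
  · rfl

noncomputable def coefC (A : Matrix (Fin n) (Fin n) (ELT ℝ 𝔽)) (i j : Fin n) : ELT ℝ 𝔽 :=
  ∑ σ ∈ univ.filter (fun σ : Equiv.Perm (Fin n) => σ i = j),
    elt 0 (((Equiv.Perm.sign σ : ℤˣ) : ℤ) : 𝔽) * ∏ k ∈ univ.erase i, A k (σ k)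

noncomputable def coefD (A : Matrix (Fin n) (Fin n) (ELT ℝ 𝔽)) (i j : Fin n) : ELT ℝ 𝔽 :=
  ∑ σ ∈ univ.filter (fun σ : Equiv.Perm (Fin n) => ¬ σ i = j),
    elt 0 (((Equiv.Perm.sign σ : ℤˣ) : ℤ) : 𝔽) * ∏ k, A k (σ k)

lemma det_upd (A : Matrix (Fin n) (Fin n) (ELT ℝ 𝔽)) (i j : Fin n) (x : ELT ℝ 𝔽) :
    det (upd A i j x) = x * coefC A i j + coefD A i j := by
  rw [det_eq_sum, ← Finset.sum_filter_add_sum_filter_not univ (fun σ : Equiv.Perm (Fin n) => σ i = j)]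
  congr 1
  · rw [coefC, Finset.mul_sum]
    apply Finset.sum_congr rfl
    intro σ hσ
    have hij : σ i = j := (Finset.mem_filter.mp hσ).2
    have h1 : ∏ k, upd A i j x k (σ k) = x * ∏ k ∈ univ.erase i, A k (σ k) := by
      rw [← Finset.mul_prod_erase univ _ (Finset.mem_univ i)]
      congr 1
      · unfold upd; rw [if_pos ⟨rfl, hij⟩]
      · apply Finset.prod_congr rfl
        intro k hk
        unfold upd
        rw [if_neg]
        rintro ⟨rfl, -⟩
        exact (Finset.mem_erase.mp hk).1 rfl
    rw [h1]; ring
  · rw [coefD]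
    apply Finset.sum_congr rfl
    intro σ hσ
    have hij : ¬ σ i = j := (Finset.mem_filter.mp hσ).2
    congr 1
    apply Finset.prod_congr rfl
    intro k _
    unfold upd
    rw [if_neg]
    rintro ⟨rfl, h2⟩
    exact hij h2

end Dev
namespace Dev
variable {𝔽 : Type} [Field 𝔽] {n : ℕ}
open ELT Finset

lemma s_add_zero {x y : ELT ℝ 𝔽} (hx : s x = 0) (hy : s y = 0) : s (x + y) = 0 := by
  rcases x with _ | ⟨a, l⟩ <;> rcases y with _ | ⟨b, m⟩ <;>
    simp_all only [s_bot, s_elt, bot_add, add_bot]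
  rcases lt_trichotomy a b with h | h | h <;>
    simp [*, elt_add_lt, elt_add_gt, elt_add_same]

lemma surpass_refl (x : ELT ℝ 𝔽) : Surpass x x :=
  ⟨bot, rfl, (add_bot x).symm⟩

lemma surpass_trans {x y z : ELT ℝ 𝔽} (h1 : Surpass x y) (h2 : Surpass y z) :
    Surpass x z := by
  obtain ⟨u, hu, hx⟩ := h1
  obtain ⟨v, hv, hy⟩ := h2
  exact ⟨v + u, s_add_zero hv hu, by rw [hx, hy, my_add_assoc]⟩

lemma fix (A : Matrix (Fin n) (Fin n) (ELT ℝ 𝔽)) (i j : Fin n) (a : ℝ)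
    (hij : A i j = elt a 0) (hA : s (det A) = 0) :
    ∃ x : ELT ℝ 𝔽, TangibleOrBot x ∧ Surpass (elt a 0) x ∧
      s (det (upd A i j x)) = 0 := by
  have hdet : det A = elt a 0 * coefC A i j + coefD A i j := by
    conv_lhs => rw [← upd_self A i j]
    rw [det_upd, hij]
  by_cases hD : s (coefD A i j) = 0
  · refine ⟨bot, Or.inl rfl, ⟨elt a 0, rfl, (bot_add _).symm⟩, ?_⟩
    rw [det_upd, bot_mul, bot_add]
    exact hD
  · rcases hC : coefC A i j with _ | ⟨c, γ⟩
    · exfalso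
      rw [hdet, hC, mul_bot, bot_add] at hA
      exact hD hA
    rcases hDD : coefD A i j with _ | ⟨d, m⟩
    · exact absurd (by rw [hDD]; rfl) hD
    have hm : m ≠ 0 := by rw [hDD] at hD; exact hD
    have hdet2 : det A = elt (a + c) 0 + elt d m := by
      rw [hdet, hC, hDD, elt_mul_elt, zero_mul]
    have hac : d < a + c := by
      rcases lt_trichotomy (a + c) d with h | h | h
      · rw [hdet2, elt_add_lt h] at hA
        exact absurd hA hm
      · exfalso; apply hm
        rw [hdet2, h, elt_add_same] at hA
        simpa using hA
      · exact h
    by_cases hγ : γ = 0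
    · refine ⟨elt ((d - c + a) / 2) 1, Or.inr (by simp), ?_, ?_⟩
      · exact ⟨elt a 0, rfl, by rw [elt_add_lt (by linarith)]⟩
      · rw [det_upd, hC, hDD, elt_mul_elt, elt_add_gt (by linarith)]
        simp [hγ]
    · refine ⟨elt (d - c) (-(m / γ)), Or.inr (by simp [hm, hγ]), ?_, ?_⟩
      · exact ⟨elt a 0, rfl, by rw [elt_add_lt (by linarith)]⟩
      · rw [det_upd, hC, hDD, elt_mul_elt, sub_add_cancel, elt_add_same]
        field_simp
        simp

end Dev
namespace Dev
variable {𝔽 : Type} [Field 𝔽] {n : ℕ}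
open ELT Finset

open scoped Classical in
noncomputable def badSet (A : Matrix (Fin n) (Fin n) (ELT ℝ 𝔽)) : Finset (Fin n × Fin n) :=
  univ.filter (fun p => ¬ TangibleOrBot (A p.1 p.2))

lemma not_tob {x : ELT ℝ 𝔽} (h : ¬ TangibleOrBot x) : ∃ a : ℝ, x = elt a 0 := by
  rcases x with _ | ⟨a, l⟩
  · exact absurd (Or.inl rfl) h
  · refine ⟨a, ?_⟩
    have : l = 0 := by
      by_contra hl
      exact h (Or.inr hl)
    rw [this]

lemma aux : ∀ (N : ℕ) (A : Matrix (Fin n) (Fin n) (ELT ℝ 𝔽)),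
    (badSet A).card ≤ N → s (det A) = 0 →
    ∃ B : Matrix (Fin n) (Fin n) (ELT ℝ 𝔽),
      (∀ i j, TangibleOrBot (B i j)) ∧ s (det B) = 0 ∧
      ∀ i j, Surpass (A i j) (B i j) := by
  intro N
  induction N with
  | zero =>
    intro A hcard hA
    refine ⟨A, fun i j => ?_, hA, fun i j => surpass_refl _⟩
    by_contra h
    have : (i, j) ∈ badSet A := by simp [badSet, h]
    have := Finset.card_pos.mpr ⟨_, this⟩
    omega
  | succ N ih =>
    intro A hcard hA
    by_cases hall : ∀ i j, TangibleOrBot (A i j)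
    · exact ⟨A, hall, hA, fun i j => surpass_refl _⟩
    · push_neg at hall
      obtain ⟨i, j, hbad⟩ := hall
      obtain ⟨a, hij⟩ := not_tob hbad
      obtain ⟨x, hxt, hxs, hxdet⟩ := fix A i j a hij hA
      have hmem : (i, j) ∈ badSet A := by simp [badSet, hbad]
      have hsub : badSet (upd A i j x) ⊆ (badSet A).erase (i, j) := by
        intro p hp
        simp only [badSet, Finset.mem_filter, Finset.mem_univ, true_and] at hp
        rcases eq_or_ne p (i, j) with rfl | hne
        · exfalso
          apply hp
          have : upd A i j x i j = x := by unfold upd; rw [if_pos ⟨rfl, rfl⟩]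
          rw [this]
          exact hxt
        · have hAp : upd A i j x p.1 p.2 = A p.1 p.2 := by
            unfold upd
            rw [if_neg]
            rintro ⟨h1, h2⟩
            exact hne (Prod.ext h1 h2)
          rw [Finset.mem_erase]
          refine ⟨hne, ?_⟩
          simp only [badSet, Finset.mem_filter, Finset.mem_univ, true_and]
          rw [← hAp]
          exact hp
      have hcard' : (badSet (upd A i j x)).card ≤ N := by
        have h1 := Finset.card_le_card hsub
        have h2 : ((badSet A).erase (i, j)).card = (badSet A).card - 1 :=
          Finset.card_erase_of_mem hmem
        have h3 : 1 ≤ (badSet A).card := Finset.card_pos.mpr ⟨_, hmem⟩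
        omega
      obtain ⟨B, hB1, hB2, hB3⟩ := ih (upd A i j x) hcard' hxdet
      refine ⟨B, hB1, hB2, fun k l => ?_⟩
      rcases eq_or_ne (k, l) ((i : Fin n), (j : Fin n)) with he | hne
      · have hk : k = i := congrArg Prod.fst he
        have hl : l = j := congrArg Prod.snd he
        rw [hk, hl, hij]
        have hx : upd A i j x i j = x := by unfold upd; rw [if_pos ⟨rfl, rfl⟩]
        have := hB3 i j
        rw [hx] at this
        exact surpass_trans hxs this
      · have hAp : upd A i j x k l = A k l := by
          unfold upd
          rw [if_neg]
          rintro ⟨h1, h2⟩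
          exact hne (Prod.ext h1 h2)
        have := hB3 k l
        rwa [hAp] at this

end Dev


/-- Every singular ELT matrix surpasses (entrywise) a singular ELT matrix all of
whose entries lie in `𝓡^× ∪ {−∞}`. -/
theorem stmt4 {𝔽 : Type} [Field 𝔽] [IsAlgClosed 𝔽] {n : ℕ}
    (A : Matrix (Fin n) (Fin n) (ELT ℝ 𝔽))
    (hA : ELT.s (ELT.det A) = 0) :
    ∃ B : Matrix (Fin n) (Fin n) (ELT ℝ 𝔽),
      (∀ i j, ELT.TangibleOrBot (B i j)) ∧
      ELT.s (ELT.det B) = 0 ∧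
      ∀ i j, ELT.Surpass (A i j) (B i j) := by
  exact Dev.aux (Dev.badSet A).card A le_rfl hA
end

section
/- Let 𝓡 = 𝓡(ℝ,𝔽) with 𝔽 an algebraically closed field, and let A ∈ 𝓡̄^{n×n} be an ELT matrix whose rows are linearly dependent. Then there exists an ELT matrix B with all entries in 𝓡^× ∪ {−∞} such that A ⊨ B entrywise and the rows of B are linearly dependent. -/
namespace ELT

variable {𝔽 : Type} [Field 𝔽]

@[simp] lemma bot_add' (x : ELT ℝ 𝔽) : bot + x = x := by cases x <;> rfl
@[simp] lemma add_bot' (x : ELT ℝ 𝔽) : x + bot = x := by cases x <;> rfl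
lemma elt_add_elt (a b : ℝ) (ℓ k : 𝔽) :
    (elt a ℓ + elt b k : ELT ℝ 𝔽) =
      if a < b then elt b k else if b < a then elt a ℓ else elt a (ℓ + k) := rfl
@[simp] lemma bot_mul' (x : ELT ℝ 𝔽) : bot * x = bot := by cases x <;> rfl
@[simp] lemma mul_bot' (x : ELT ℝ 𝔽) : x * bot = bot := by cases x <;> rfl
lemma elt_mul_elt (a b : ℝ) (ℓ k : 𝔽) :
    (elt a ℓ * elt b k : ELT ℝ 𝔽) = elt (a + b) (ℓ * k) := rfl

@[simp] lemma t_zero : t (0 : ELT ℝ 𝔽) = ⊥ := rfl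
@[simp] lemma t_bot : t (bot : ELT ℝ 𝔽) = ⊥ := rfl
@[simp] lemma s_bot : s (bot : ELT ℝ 𝔽) = (0 : 𝔽) := rfl

lemma t_eq_bot_iff {x : ELT ℝ 𝔽} : t x = ⊥ ↔ x = bot := by
  cases x <;> simp [t]

lemma s_mul' (x y : ELT ℝ 𝔽) : s (x * y) = s x * s y := by
  cases x <;> cases y <;> simp [s, elt_mul_elt]

lemma t_add (x y : ELT ℝ 𝔽) : t (x + y) = max (t x) (t y) := by
  cases x with
  | bot => simp
  | elt a ℓ =>
    cases y with
    | bot => simp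
    | elt b k =>
      rw [elt_add_elt]
      rcases lt_trichotomy a b with h | h | h
      · simp only [if_pos h, t]
        rw [max_eq_right]; exact_mod_cast h.le
      · subst h; simp [t]
      · simp only [if_neg (asymm h), if_pos h, t]
        rw [max_eq_left]; exact_mod_cast h.le

/-- Leading coefficient of `x` at level `m`. -/
noncomputable def coefAt (m : WithBot ℝ) (x : ELT ℝ 𝔽) : 𝔽 := if t x = m then s x else 0

@[simp] lemma coefAt_bot (m : WithBot ℝ) : coefAt m (bot : ELT ℝ 𝔽) = 0 := by
  unfold coefAt
  split_ifs <;> rfl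
@[simp] lemma coefAt_zero (m : WithBot ℝ) : coefAt m (0 : ELT ℝ 𝔽) = 0 :=
  coefAt_bot m

lemma coefAt_t_self (x : ELT ℝ 𝔽) : coefAt (t x) x = s x := by
  simp [coefAt]

lemma coefAt_add {m : WithBot ℝ} {x y : ELT ℝ 𝔽} (hx : t x ≤ m) (hy : t y ≤ m) :
    coefAt m (x + y) = coefAt m x + coefAt m y := by
  cases x with
  | bot => simp
  | elt a ℓ =>
    cases y with
    | bot => simp
    | elt b k =>
      rw [elt_add_elt]
      rcases lt_trichotomy a b with h | h | h
      · have hne : (a : WithBot ℝ) ≠ m := by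
          intro e
          exact absurd ((WithBot.coe_lt_coe.mpr h).trans_le hy) (e ▸ lt_irrefl _)
        simp [coefAt, t, h, hne]
        rfl
      · subst h
        simp only [if_neg (lt_irrefl a)]
        by_cases e : (a : WithBot ℝ) = m <;> simp [coefAt, t, e, s]
      · have hne : (b : WithBot ℝ) ≠ m := by
          intro e
          exact absurd ((WithBot.coe_lt_coe.mpr h).trans_le hx) (e ▸ lt_irrefl _)
        simp [coefAt, t, h, h.not_gt, hne]
        rfl

lemma t_listSum_le {m : WithBot ℝ} {l : List (ELT ℝ 𝔽)} (h : ∀ x ∈ l, t x ≤ m) :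
    t l.sum ≤ m := by
  induction l with
  | nil => simp
  | cons x l ih =>
    rw [List.sum_cons, t_add]
    exact max_le (h x (List.mem_cons_self)) (ih fun y hy => h y (List.mem_cons_of_mem _ hy))

lemma t_le_listSum {x : ELT ℝ 𝔽} {l : List (ELT ℝ 𝔽)} (hx : x ∈ l) : t x ≤ t l.sum := by
  induction l with
  | nil => cases hx
  | cons y l ih =>
    rw [List.sum_cons, t_add]
    rcases List.mem_cons.mp hx with h | h
    · exact h ▸ le_max_left _ _
    · exact (ih h).trans (le_max_right _ _)

lemma coefAt_listSum {m : WithBot ℝ} {l : List (ELT ℝ 𝔽)} (h : ∀ x ∈ l, t x ≤ m) :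
    coefAt m l.sum = (l.map (coefAt m)).sum := by
  induction l with
  | nil => simp
  | cons x l ih =>
    rw [List.sum_cons, List.map_cons, List.sum_cons,
      coefAt_add (h x (List.mem_cons_self))
        (t_listSum_le fun y hy => h y (List.mem_cons_of_mem _ hy)),
      ih fun y hy => h y (List.mem_cons_of_mem _ hy)]

lemma exists_t_eq_listSum {l : List (ELT ℝ 𝔽)} (h : t l.sum ≠ ⊥) :
    ∃ x ∈ l, t x = t l.sum := by
  induction l with
  | nil => simp at h
  | cons x l ih =>
    rw [List.sum_cons, t_add] at h ⊢
    rcases le_total (t l.sum) (t x) with hle | hle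
    · exact ⟨x, List.mem_cons_self, (max_eq_left hle).symm⟩
    · rw [max_eq_right hle] at h ⊢
      obtain ⟨y, hy, hty⟩ := ih h
      exact ⟨y, List.mem_cons_of_mem _ hy, hty⟩

-- versions for `fsum`

lemma t_fsum_le {m : WithBot ℝ} {k : ℕ} {f : Fin k → ELT ℝ 𝔽} (h : ∀ i, t (f i) ≤ m) :
    t (fsum f) ≤ m := by
  refine t_listSum_le fun x hx => ?_
  obtain ⟨i, rfl⟩ := List.mem_ofFn.mp hx
  exact h i

lemma t_le_fsum {k : ℕ} (f : Fin k → ELT ℝ 𝔽) (i : Fin k) : t (f i) ≤ t (fsum f) :=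
  t_le_listSum (List.mem_ofFn.mpr ⟨i, rfl⟩)

lemma coefAt_fsum {m : WithBot ℝ} {k : ℕ} {f : Fin k → ELT ℝ 𝔽} (h : ∀ i, t (f i) ≤ m) :
    coefAt m (fsum f) = ∑ i, coefAt m (f i) := by
  rw [fsum, coefAt_listSum (fun x hx => by
    obtain ⟨i, rfl⟩ := List.mem_ofFn.mp hx; exact h i)]
  rw [List.map_ofFn, List.sum_ofFn]
  rfl

lemma exists_t_eq_fsum {k : ℕ} {f : Fin k → ELT ℝ 𝔽} (h : t (fsum f) ≠ ⊥) :
    ∃ i, t (f i) = t (fsum f) := by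
  obtain ⟨x, hx, htx⟩ := exists_t_eq_listSum h
  obtain ⟨i, rfl⟩ := List.mem_ofFn.mp hx
  exact ⟨i, htx⟩

lemma s_fsum_eq {k : ℕ} (f : Fin k → ELT ℝ 𝔽) :
    s (fsum f) = ∑ i, coefAt (t (fsum f)) (f i) := by
  rw [← coefAt_fsum (fun i => t_le_fsum f i), coefAt_t_self]

lemma surpass_self (x : ELT ℝ 𝔽) : Surpass x x :=
  ⟨bot, rfl, (add_bot' x).symm⟩

lemma surpass_of_lt {x y : ELT ℝ 𝔽} (hx : s x = 0) (h : t y < t x) : Surpass x y := by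
  refine ⟨x, hx, ?_⟩
  cases y with
  | bot => simp
  | elt b k =>
    cases x with
    | bot => simp [t] at h
    | elt a ℓ =>
      have : b < a := WithBot.coe_lt_coe.mp h
      rw [elt_add_elt, if_pos this]

/-- The single-column fixing lemma. -/
lemma column_fix {n : ℕ} (a v : Fin n → ELT ℝ 𝔽)
    (ha : ∀ i, TangibleOrBot (a i))
    (h : s (fsum fun i => a i * v i) = 0) :
    ∃ b : Fin n → ELT ℝ 𝔽, (∀ i, TangibleOrBot (b i)) ∧ (∀ i, Surpass (v i) (b i)) ∧
      s (fsum fun i => a i * b i) = 0 := by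
  classical
  set b0 : Fin n → ELT ℝ 𝔽 := fun i => if s (v i) = 0 then bot else v i with hb0
  have hb0tb : ∀ i, TangibleOrBot (b0 i) := by
    intro i
    by_cases hi : s (v i) = 0 <;> simp [hb0, hi, TangibleOrBot]
  have hb0sur : ∀ i, Surpass (v i) (b0 i) := by
    intro i
    by_cases hi : s (v i) = 0
    · exact ⟨v i, hi, by simp [hb0, hi]⟩
    · simpa [hb0, hi] using surpass_self (v i)
  by_cases hS : s (fsum fun i => a i * b0 i) = 0
  · exact ⟨b0, hb0tb, hb0sur, hS⟩
  -- need a fix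
  set g : Fin n → ELT ℝ 𝔽 := fun i => a i * v i with hg
  set g0 : Fin n → ELT ℝ 𝔽 := fun i => a i * b0 i with hg0
  set M : WithBot ℝ := t (fsum g) with hM
  set M0 : WithBot ℝ := t (fsum g0) with hM0
  have hg0cases : ∀ i, g0 i = g i ∨ g0 i = bot := by
    intro i
    by_cases hi : s (v i) = 0
    · right; simp [hg0, hb0, hi]
    · left; simp [hg0, hg, hb0, hi]
  have hg0leM : ∀ i, t (g0 i) ≤ M := by
    intro i
    rcases hg0cases i with e | e
    · rw [e]; exact t_le_fsum g i
    · rw [e]; simp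
  have hM0leM : M0 ≤ M := t_fsum_le hg0leM
  have hcoefM : ∀ i, coefAt M (g0 i) = coefAt M (g i) := by
    intro i
    by_cases hi : s (v i) = 0
    · have e0 : g0 i = bot := by simp [hg0, hb0, hi]
      have : s (g i) = 0 := by rw [hg]; simp [s_mul', hi]
      simp [e0, coefAt, this]
    · simp [hg0, hg, hb0, hi]
  have hsumM : ∑ i, coefAt M (g i) = 0 := by
    rw [← s_fsum_eq]; exact h
  have hM0ne : M0 ≠ M := by
    intro e
    apply hS
    have : s (fsum g0) = ∑ i, coefAt M0 (g0 i) := s_fsum_eq g0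
    rw [this, e]
    calc ∑ i, coefAt M (g0 i) = ∑ i, coefAt M (g i) := by
          exact Finset.sum_congr rfl fun i _ => hcoefM i
      _ = 0 := hsumM
  have hM0lt : M0 < M := lt_of_le_of_ne hM0leM hM0ne
  have hM0bot : M0 ≠ ⊥ := by
    intro e
    apply hS
    have : fsum g0 = bot := t_eq_bot_iff.mp e
    rw [show (fsum fun i => a i * b0 i) = fsum g0 from rfl, this]; rfl
  have hMbot : M ≠ ⊥ := fun e => hM0bot (le_bot_iff.mp (e ▸ hM0leM))
  obtain ⟨r', hr'⟩ := WithBot.ne_bot_iff_exists.mp hM0bot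
  obtain ⟨r, hr⟩ := WithBot.ne_bot_iff_exists.mp hMbot
  have hrr' : r' < r := by
    rw [← hr', ← hr] at hM0lt; exact_mod_cast hM0lt
  -- find an attainer of M with zero-layered entry
  have hattain : ∃ i0, t (g i0) = M ∧ s (v i0) = 0 := by
    by_contra hcon
    push_neg at hcon
    obtain ⟨i1, hi1⟩ := exists_t_eq_fsum (f := g) hMbot
    have hsv : s (v i1) ≠ 0 := hcon i1 hi1
    have : g0 i1 = g i1 := by simp [hg0, hg, hb0, hsv]
    have : M ≤ M0 := by
      rw [hM, hM0, ← hi1, ← this]; exact t_le_fsum g0 i1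
    exact absurd (lt_of_lt_of_le hM0lt this) (lt_irrefl _)
  obtain ⟨i0, hti0, hsvi0⟩ := hattain
  have hgne : g i0 ≠ bot := fun e => hMbot (by rw [← hti0, e]; rfl)
  have hane : a i0 ≠ bot := by
    intro e; apply hgne; rw [hg]; simp [e]
  have hvne : v i0 ≠ bot := by
    intro e; apply hgne; rw [hg]; simp [e]
  obtain ⟨α, κ, hαe⟩ : ∃ α κ, a i0 = elt α κ := by
    cases hae : a i0 with
    | bot => exact absurd hae hane
    | elt α κ => exact ⟨α, κ, rfl⟩
  obtain ⟨w, ℓw, hve⟩ : ∃ w ℓw, v i0 = elt w ℓw := by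
    cases hve : v i0 with
    | bot => exact absurd hve hvne
    | elt w ℓw => exact ⟨w, ℓw, rfl⟩
  have hℓw : ℓw = 0 := by rw [hve] at hsvi0; exact hsvi0
  have hκ : κ ≠ 0 := by
    rcases ha i0 with hb | hb
    · exact absurd hb hane
    · rw [hαe] at hb; exact hb
  have hαw : α + w = r := by
    have : t (g i0) = ((α + w : ℝ) : WithBot ℝ) := by
      rw [hg]; simp [hαe, hve, elt_mul_elt, t]
    rw [this, ← hr] at hti0
    exact_mod_cast hti0
  set S : 𝔽 := s (fsum g0) with hSdef
  have hSne : S ≠ 0 := hS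
  set b1 : Fin n → ELT ℝ 𝔽 := Function.update b0 i0 (elt (r' - α) (-S / κ)) with hb1
  set g1 : Fin n → ELT ℝ 𝔽 := fun i => a i * b1 i with hg1
  have hg1i0 : g1 i0 = elt r' (-S) := by
    rw [hg1]
    simp only [hb1, Function.update_self, hαe, elt_mul_elt]
    congr 1
    · ring
    · field_simp
  have hg1ne : ∀ i, i ≠ i0 → g1 i = g0 i := by
    intro i hi
    show a i * b1 i = a i * b0 i
    rw [hb1, Function.update_of_ne hi]
  have hg0i0 : g0 i0 = bot := by
    rw [hg0]
    simp [hb0, hve, hℓw, s]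
  have hg1le : ∀ i, t (g1 i) ≤ M0 := by
    intro i
    by_cases hi : i = i0
    · subst hi
      rw [hg1i0]
      show ((r' : ℝ) : WithBot ℝ) ≤ M0
      rw [hr']
    · rw [hg1ne i hi]; exact t_le_fsum g0 i
  have htg1 : t (fsum g1) = M0 := by
    refine le_antisymm (t_fsum_le hg1le) ?_
    have := t_le_fsum g1 i0
    rw [hg1i0] at this
    rw [← hr']
    exact this
  have hscoef : s (fsum g1) = ∑ i, coefAt M0 (g1 i) := by
    rw [s_fsum_eq, htg1]
  have hsum0 : ∑ i, coefAt M0 (g0 i) = S := by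
    rw [hSdef, s_fsum_eq]
  have hupdate : (fun i => coefAt M0 (g1 i)) =
      Function.update (fun i => coefAt M0 (g0 i)) i0 (-S) := by
    funext i
    by_cases hi : i = i0
    · subst hi
      rw [hg1i0, Function.update_self]
      simp [coefAt, t, s, hr']
    · rw [hg1ne i hi, Function.update_of_ne hi]
  have hfinal : s (fsum g1) = 0 := by
    rw [hscoef]
    calc ∑ i, coefAt M0 (g1 i)
        = ∑ i, Function.update (fun i => coefAt M0 (g0 i)) i0 (-S) i := by
          rw [hupdate]
      _ = -S + ∑ i ∈ Finset.univ \ {i0}, coefAt M0 (g0 i) :=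
          Finset.sum_update_of_mem (Finset.mem_univ i0) _ _
      _ = -S + (∑ i, coefAt M0 (g0 i) - coefAt M0 (g0 i0)) := by
          rw [Finset.sum_sdiff_eq_sub (by simp)]
          simp
      _ = 0 := by rw [hsum0, hg0i0, coefAt_bot]; ring
  refine ⟨b1, ?_, ?_, hfinal⟩
  · intro i
    by_cases hi : i = i0
    · subst hi
      right
      rw [hb1, Function.update_self]
      show -S / κ ≠ 0
      exact div_ne_zero (neg_ne_zero.mpr hSne) hκ
    · rw [hb1, Function.update_of_ne hi]; exact hb0tb i
  · intro i
    by_cases hi : i = i0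
    · subst hi
      rw [hb1, Function.update_self]
      refine surpass_of_lt hsvi0 ?_
      rw [hve]
      show ((r' - α : ℝ) : WithBot ℝ) < (w : WithBot ℝ)
      exact_mod_cast (by linarith : r' - α < w)
    · rw [hb1, Function.update_of_ne hi]; exact hb0sur i

end ELT

/-- Every ELT matrix with linearly dependent rows surpasses (entrywise) a matrix
with entries in `𝓡^× ∪ {−∞}` whose rows are linearly dependent. -/
theorem stmt5 {𝔽 : Type} [Field 𝔽] [IsAlgClosed 𝔽] {n : ℕ}
    (A : Matrix (Fin n) (Fin n) (ELT ℝ 𝔽))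
    (hA : ELT.LinDep (fun i j => A i j)) :
    ∃ B : Matrix (Fin n) (Fin n) (ELT ℝ 𝔽),
      (∀ i j, ELT.TangibleOrBot (B i j)) ∧
      (∀ i j, ELT.Surpass (A i j) (B i j)) ∧
      ELT.LinDep (fun i j => B i j) := by
  obtain ⟨a, ha, hne, hsum⟩ := hA
  have hcol : ∀ j : Fin n, ∃ b : Fin n → ELT ℝ 𝔽,
      (∀ i, ELT.TangibleOrBot (b i)) ∧ (∀ i, ELT.Surpass (A i j) (b i)) ∧
      ELT.s (ELT.fsum fun i => a i * b i) = 0 :=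
    fun j => ELT.column_fix a (fun i => A i j) ha (hsum j)
  choose b hbtb hbsur hbsum using hcol
  exact ⟨Matrix.of fun i j => b j i, fun i j => hbtb j i, fun i j => hbsur j i,
    a, ha, hne, hbsum⟩
end

section
/- Let 𝓡 = 𝓡(ℝ,𝔽) with 𝔽 an algebraically closed field, and let A ∈ 𝓡̄^{n×n} be an ELT matrix. Then the following are equivalent: (i) the rows of A are linearly dependent; (ii) the columns of A are linearly dependent; (iii) A is singular, i.e. s(det A) = 0. -/
set_option linter.unusedSectionVars false
set_option linter.unnecessarySimpa false
set_option maxHeartbeats 1000000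


namespace ELTProof

open ELT

variable {𝔽 : Type} [Field 𝔽]

abbrev K (𝔽 : Type) [Field 𝔽] : Type := HahnSeries ℝ 𝔽

-- basic ELT simp lemmas
@[simp] lemma zero_def : (0 : ELT ℝ 𝔽) = ELT.bot := rfl
@[simp] lemma bot_add (y : ELT ℝ 𝔽) : ELT.bot + y = y := by cases y <;> rfl
@[simp] lemma add_bot (x : ELT ℝ 𝔽) : x + ELT.bot = x := by cases x <;> rfl
lemma elt_add_elt (a c : ℝ) (ℓ k : 𝔽) : ELT.elt a ℓ + ELT.elt c k =
    if a < c then ELT.elt c k else if c < a then ELT.elt a ℓ else ELT.elt a (ℓ + k) := rfl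
@[simp] lemma bot_mul (y : ELT ℝ 𝔽) : ELT.bot * y = ELT.bot := by cases y <;> rfl
@[simp] lemma mul_bot (x : ELT ℝ 𝔽) : x * ELT.bot = ELT.bot := by cases x <;> rfl
@[simp] lemma elt_mul_elt (a c : ℝ) (ℓ k : 𝔽) :
    ELT.elt a ℓ * ELT.elt c k = ELT.elt (a + c) (ℓ * k) := rfl

lemma t_add (x y : ELT ℝ 𝔽) : ELT.t (x + y) = max (ELT.t x) (ELT.t y) := by
  cases x with
  | bot => simp [ELT.t]
  | elt a ℓ =>
    cases y with
    | bot => simp [ELT.t]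
    | elt c k =>
      rw [elt_add_elt]
      rcases lt_trichotomy a c with h | h | h
      · rw [if_pos h]
        simp [ELT.t, max_eq_right (WithBot.coe_le_coe.2 h.le)]
      · subst h
        simp [ELT.t]
      · rw [if_neg (not_lt.2 h.le), if_pos h]
        simp [ELT.t, max_eq_left (WithBot.coe_le_coe.2 h.le)]

lemma t_mul (x y : ELT ℝ 𝔽) : ELT.t (x * y) = ELT.t x + ELT.t y := by
  cases x with
  | bot => simp [ELT.t]
  | elt a ℓ =>
    cases y with
    | bot => simp [ELT.t]
    | elt c k => simp [ELT.t, ← WithBot.coe_add]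

/-- The lifting relation: `Rel x h` says that the Hahn series `h` has
all coefficients below `-(t x)` zero, and coefficient `s x` at `-(t x)`. -/
def Rel : ELT ℝ 𝔽 → K 𝔽 → Prop
  | ELT.bot => fun h => h = 0
  | ELT.elt b ℓ => fun h => h.coeff (-b) = ℓ ∧ ∀ q, q < -b → h.coeff q = 0

lemma Rel.s_eq_zero {x : ELT ℝ 𝔽} (hx : Rel x 0) : ELT.s x = 0 := by
  cases x with
  | bot => rfl
  | elt b ℓ => exact hx.1.symm.trans rfl

lemma Rel_zero : Rel (0 : ELT ℝ 𝔽) (0 : K 𝔽) := rfl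

lemma Rel_add {x y : ELT ℝ 𝔽} {h g : K 𝔽} (hx : Rel x h) (hy : Rel y g) :
    Rel (x + y) (h + g) := by
  cases x with
  | bot => rw [Rel] at hx; subst hx; simpa using hy
  | elt a ℓ =>
    cases y with
    | bot => rw [Rel] at hy; subst hy; simpa using hx
    | elt c k =>
      obtain ⟨ha1, ha2⟩ := hx
      obtain ⟨hc1, hc2⟩ := hy
      rw [elt_add_elt]
      rcases lt_trichotomy a c with hlt | heq | hgt
      · rw [if_pos hlt]
        refine ⟨?_, fun q hq => ?_⟩
        · rw [HahnSeries.coeff_add, hc1, ha2 _ (by linarith), zero_add]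
        · rw [HahnSeries.coeff_add, hc2 _ hq, ha2 _ (by linarith), zero_add]
      · subst heq
        rw [if_neg (lt_irrefl a), if_neg (lt_irrefl a)]
        refine ⟨?_, fun q hq => ?_⟩
        · rw [HahnSeries.coeff_add, ha1, hc1]
        · rw [HahnSeries.coeff_add, ha2 _ hq, hc2 _ hq, zero_add]
      · rw [if_neg (not_lt.2 hgt.le), if_pos hgt]
        refine ⟨?_, fun q hq => ?_⟩
        · rw [HahnSeries.coeff_add, ha1, hc2 _ (by linarith), add_zero]
        · rw [HahnSeries.coeff_add, ha2 _ hq, hc2 _ (by linarith), zero_add]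

lemma coeff_mul_of_lowbdd {h g : K 𝔽} {r s : ℝ} (hh : ∀ q, q < r → h.coeff q = 0)
    (hg : ∀ q, q < s → g.coeff q = 0) :
    ((h * g).coeff (r + s) = h.coeff r * g.coeff s ∧
      ∀ q, q < r + s → (h * g).coeff q = 0) := by
  have hmem : ∀ (q : ℝ) (ij : ℝ × ℝ),
      ij ∈ Finset.antidiagonal h.isPWO_support g.isPWO_support q →
      r ≤ ij.1 ∧ s ≤ ij.2 ∧ ij.1 + ij.2 = q := by
    intro q ij hij
    rw [Finset.mem_antidiagonal] at hij
    refine ⟨?_, ?_, hij.2.2⟩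
    · by_contra hc
      exact hij.1 (hh _ (not_le.1 hc))
    · by_contra hc
      exact hij.2.1 (hg _ (not_le.1 hc))
  constructor
  · rw [HahnSeries.coeff_mul]
    rw [Finset.sum_eq_single (r, s)]
    · intro ij hij hne
      obtain ⟨h1, h2, h3⟩ := hmem _ _ hij
      exfalso
      apply hne
      have : ij.1 = r := by nlinarith [h1, h2, h3]
      have : ij.2 = s := by nlinarith
      exact Prod.ext ‹ij.1 = r› this
    · intro hnm
      rw [Finset.mem_antidiagonal] at hnm
      push_neg at hnm
      simp only [Set.mem_setOf_eq, HahnSeries.mem_support] at hnm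
      by_cases h1 : h.coeff r = 0
      · rw [h1, zero_mul]
      · by_cases h2 : g.coeff s = 0
        · rw [h2, mul_zero]
        · exact absurd rfl (hnm h1 h2)
  · intro q hq
    rw [HahnSeries.coeff_mul]
    apply Finset.sum_eq_zero
    intro ij hij
    obtain ⟨h1, h2, h3⟩ := hmem _ _ hij
    exfalso; linarith

lemma Rel_mul {x y : ELT ℝ 𝔽} {h g : K 𝔽} (hx : Rel x h) (hy : Rel y g) :
    Rel (x * y) (h * g) := by
  cases x with
  | bot => rw [Rel] at hx; subst hx; simpa [Rel] using (zero_mul g)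
  | elt a ℓ =>
    cases y with
    | bot => rw [Rel] at hy; subst hy; simpa [Rel] using (mul_zero h)
    | elt c k =>
      obtain ⟨ha1, ha2⟩ := hx
      obtain ⟨hc1, hc2⟩ := hy
      have := coeff_mul_of_lowbdd ha2 hc2
      rw [elt_mul_elt]
      refine ⟨?_, fun q hq => this.2 q (by linarith)⟩
      rw [show -(a + c) = -a + -c by ring, this.1, ha1, hc1]

-- === part 2 ===

/-- Monomial lift. -/
noncomputable def mlift : ELT ℝ 𝔽 → K 𝔽
  | ELT.bot => 0
  | ELT.elt b ℓ => HahnSeries.single (-b) ℓ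

@[simp] lemma mlift_bot : mlift (ELT.bot : ELT ℝ 𝔽) = 0 := rfl
@[simp] lemma mlift_elt (b : ℝ) (ℓ : 𝔽) :
    mlift (ELT.elt b ℓ) = HahnSeries.single (-b) ℓ := rfl

lemma Rel_mlift (x : ELT ℝ 𝔽) : Rel x (mlift x) := by
  cases x with
  | bot => rfl
  | elt b ℓ =>
    rw [mlift_elt]
    refine ⟨HahnSeries.coeff_single_same _ _, fun q hq => ?_⟩
    rw [HahnSeries.coeff_single, if_neg (by linarith)]

lemma Rel_one : Rel (1 : ELT ℝ 𝔽) (1 : K 𝔽) := by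
  show Rel (ELT.elt 0 1) 1
  refine ⟨?_, fun q hq => ?_⟩
  · rw [neg_zero, HahnSeries.coeff_one, if_pos rfl]
  · rw [HahnSeries.coeff_one, if_neg (by rw [neg_zero] at hq; linarith)]

lemma Rel_eltC (c : 𝔽) : Rel (ELT.elt 0 c) (HahnSeries.single (0:ℝ) c) := by
  have := Rel_mlift (ELT.elt 0 c)
  rw [show mlift (ELT.elt 0 c) = HahnSeries.single (-(0:ℝ)) c from rfl, neg_zero] at this
  exact this

lemma Rel_listSum {ι : Type*} (l : List ι) (f : ι → ELT ℝ 𝔽) (g : ι → K 𝔽)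
    (h : ∀ i ∈ l, Rel (f i) (g i)) : Rel (l.map f).sum (l.map g).sum := by
  induction l with
  | nil => simpa using Rel_zero
  | cons a l ih =>
    simp only [List.map_cons, List.sum_cons]
    exact Rel_add (h a (List.mem_cons_self)) (ih fun i hi => h i (List.mem_cons_of_mem a hi))

lemma Rel_listProd {m : ℕ} (f : Fin m → ELT ℝ 𝔽) (g : Fin m → K 𝔽)
    (h : ∀ i, Rel (f i) (g i)) : Rel (List.ofFn f).prod (List.ofFn g).prod := by
  induction m with
  | zero => simpa using Rel_one
  | succ m ih =>
    rw [List.ofFn_succ, List.ofFn_succ, List.prod_cons, List.prod_cons]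
    exact Rel_mul (h 0) (ih _ _ fun i => h i.succ)

lemma Rel_ELTrop (u : K 𝔽) : Rel (ELT.ELTrop u) u := by
  rw [ELT.ELTrop]
  split_ifs with h
  · subst h; rfl
  · refine ⟨by rw [neg_neg], fun q hq => ?_⟩
    rw [neg_neg] at hq
    exact HahnSeries.coeff_eq_zero_of_lt_order hq

/-- Sum over `Finset.toList` equals `Finset.sum`, for `K`. -/
lemma listSum_toList_eq {ι : Type*} (s : Finset ι) (g : ι → K 𝔽) :
    (s.toList.map g).sum = ∑ i ∈ s, g i := by
  have h1 : ((s.toList.map g : List (K 𝔽)) : Multiset (K 𝔽)).sum = (s.toList.map g).sum := by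
    simp
  rw [← h1]
  have h2 : ((s.toList.map g : List (K 𝔽)) : Multiset (K 𝔽)) = Multiset.map g s.val := by
    rw [← Multiset.map_coe, Finset.toList, Multiset.coe_toList]
  rw [h2]
  rfl

lemma sign_smul_eq (σu : ℤˣ) (x : K 𝔽) :
    σu • x = HahnSeries.single (0:ℝ) (((σu : ℤ) : 𝔽)) * x := by
  rw [Units.smul_def, zsmul_eq_mul]
  congr 1

lemma Rel_det {n : ℕ} (A : Matrix (Fin n) (Fin n) (ELT ℝ 𝔽)) (H : Matrix (Fin n) (Fin n) (K 𝔽))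
    (h : ∀ i j, Rel (A i j) (H i j)) : Rel (ELT.det A) H.det := by
  have hdet : H.det = ((Finset.univ : Finset (Equiv.Perm (Fin n))).toList.map fun σ =>
      HahnSeries.single (0:ℝ) ((((Equiv.Perm.sign σ : ℤˣ) : ℤ)) : 𝔽) *
        (List.ofFn fun i => H i (σ i)).prod).sum := by
    rw [listSum_toList_eq]
    rw [← Matrix.det_transpose, Matrix.det_apply]
    refine Finset.sum_congr rfl fun σ _ => ?_
    rw [sign_smul_eq]
    congr 1
    rw [List.prod_ofFn]
    rfl
  rw [ELT.det, hdet]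
  refine Rel_listSum _ _ _ fun σ _ => ?_
  refine Rel_mul ?_ (Rel_listProd _ _ fun i => h i (σ i))
  exact Rel_eltC _

-- === part 3 ===

lemma t_listSum_attain (l : List (ELT ℝ 𝔽)) :
    l.sum = ELT.bot ∨ ∃ x ∈ l, ELT.t l.sum = ELT.t x := by
  induction l with
  | nil => exact Or.inl rfl
  | cons a l ih =>
    rw [List.sum_cons]
    rcases le_or_gt (ELT.t l.sum) (ELT.t a) with h | h
    · right
      exact ⟨a, List.mem_cons_self, by rw [t_add, max_eq_left h]⟩
    · rcases ih with hbot | ⟨x, hx, hxx⟩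
      · rw [hbot] at h
        simp [ELT.t] at h
      · right
        exact ⟨x, List.mem_cons_of_mem a hx, by rw [t_add, max_eq_right h.le, hxx]⟩

lemma t_fsum_attain {m : ℕ} (f : Fin m → ELT ℝ 𝔽) (h : ELT.fsum f ≠ ELT.bot) :
    ∃ i, ELT.t (ELT.fsum f) = ELT.t (f i) := by
  rcases t_listSum_attain (List.ofFn f) with hbot | ⟨x, hx, hxx⟩
  · exact absurd hbot h
  · obtain ⟨i, rfl⟩ := List.mem_ofFn.1 hx
    exact ⟨i, hxx⟩

/-- Transfer: an exact kernel over `K` yields an `ELT` linear dependence. -/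
lemma transfer_linDep {m n' : ℕ} (V : Fin m → Fin n' → ELT ℝ 𝔽) (H : Fin m → Fin n' → K 𝔽)
    (hR : ∀ i j, Rel (V i j) (H i j)) (u : Fin m → K 𝔽) (hu : u ≠ 0)
    (hker : ∀ j, ∑ i, u i * H i j = 0) : ELT.LinDep V := by
  refine ⟨fun i => ELT.ELTrop (u i), fun i => ?_, ?_, fun j => ?_⟩
  · show ELT.ELTrop (u i) = ELT.bot ∨ ELT.s (ELT.ELTrop (u i)) ≠ 0
    by_cases h : u i = 0
    · left; rw [ELT.ELTrop, if_pos h]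
    · right
      rw [ELT.ELTrop, if_neg h]
      simpa [ELT.s] using HahnSeries.coeff_order_eq_zero.not.2 h
  · obtain ⟨i, hi⟩ := Function.ne_iff.1 hu
    rw [Pi.zero_apply] at hi
    refine ⟨i, ?_⟩
    show ELT.ELTrop (u i) ≠ ELT.bot
    rw [ELT.ELTrop, if_neg hi]
    simp
  · have hrel : Rel (ELT.fsum fun i => ELT.ELTrop (u i) * V i j)
        ((List.ofFn fun i => u i * H i j).sum) := by
      rw [ELT.fsum, show (List.ofFn fun i => ELT.ELTrop (u i) * V i j) =
        (List.finRange m).map (fun i => ELT.ELTrop (u i) * V i j) from (List.ofFn_eq_map),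
        show (List.ofFn fun i => u i * H i j) =
        (List.finRange m).map (fun i => u i * H i j) from (List.ofFn_eq_map)]
      exact Rel_listSum _ _ _ fun i _ => Rel_mul (Rel_ELTrop (u i)) (hR i j)
    rw [Fin.sum_ofFn, hker j] at hrel
    exact hrel.s_eq_zero

/-- Reverse: solve one column exactly. -/
lemma column_solve {m : ℕ} (a : Fin m → ELT ℝ 𝔽) (ha : ∀ i, TangibleOrBot (a i))
    (col : Fin m → ELT ℝ 𝔽) (hs : ELT.s (ELT.fsum fun i => a i * col i) = 0) :
    ∃ h : Fin m → K 𝔽, (∀ i, Rel (col i) (h i)) ∧ ∑ i, mlift (a i) * h i = 0 := by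
  classical
  have hrel : Rel (ELT.fsum fun i => a i * col i) (∑ i, mlift (a i) * mlift (col i)) := by
    rw [← Fin.sum_ofFn (f := fun i => mlift (a i) * mlift (col i))]
    rw [ELT.fsum, show (List.ofFn fun i => a i * col i) =
        (List.finRange m).map (fun i => a i * col i) from (List.ofFn_eq_map),
      show (List.ofFn fun i => mlift (a i) * mlift (col i)) =
        (List.finRange m).map (fun i => mlift (a i) * mlift (col i)) from (List.ofFn_eq_map)]
    exact Rel_listSum _ _ _ fun i _ => Rel_mul (Rel_mlift _) (Rel_mlift _)
  set S0 := ∑ i, mlift (a i) * mlift (col i) with hS0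
  cases hcase : (ELT.fsum fun i => a i * col i) with
  | bot =>
    rw [hcase] at hrel
    rw [Rel] at hrel
    exact ⟨fun i => mlift (col i), fun i => Rel_mlift _, hrel⟩
  | elt v μ =>
    rw [hcase] at hrel
    obtain ⟨hc1, hc2⟩ := hrel
    have hμ : μ = 0 := by rw [hcase] at hs; exact hs
    -- attainment
    obtain ⟨i₀, hi₀⟩ := t_fsum_attain (fun i => a i * col i)
      (by rw [hcase]; simp)
    rw [hcase] at hi₀
    rw [t_mul] at hi₀
    -- both factors nonbot
    cases hai : a i₀ with
    | bot => rw [hai] at hi₀; simp [ELT.t] at hi₀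
    | elt c k =>
      cases hcol : col i₀ with
      | bot => rw [hai, hcol] at hi₀; simp [ELT.t] at hi₀
      | elt b ℓ =>
        rw [hai, hcol] at hi₀
        have hvcb : v = c + b := by
          rw [ELT.t, ELT.t, ELT.t, ← WithBot.coe_add, WithBot.coe_inj] at hi₀
          exact hi₀
        have hk : k ≠ 0 := by
          rcases ha i₀ with h' | h'
          · rw [hai] at h'; exact absurd h' (by simp)
          · rw [hai] at h'; exact h'
        -- the fix at i₀
        set m0 : K 𝔽 := HahnSeries.single c k⁻¹ with hm0
        set fix : K 𝔽 := mlift (col i₀) - m0 * S0 with hfix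
        refine ⟨Function.update (fun i => mlift (col i)) i₀ fix, fun i => ?_, ?_⟩
        · rcases eq_or_ne i i₀ with rfl | hne
          · rw [Function.update_self, hcol]
            have e1 : ∀ q : ℝ, (m0 * S0).coeff q = k⁻¹ * S0.coeff (q - c) := by
              intro q
              have : q = (q - c) + c := by ring
              rw [this, hm0, HahnSeries.coeff_single_mul_add]
              ring_nf
            constructor
            · rw [hfix, HahnSeries.coeff_sub, e1]
              have h2 : -b - c = -v := by rw [hvcb]; ring
              rw [h2, hc1, hμ, mul_zero, sub_zero, hcol, mlift_elt]
              exact HahnSeries.coeff_single_same _ _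
            · intro q hq
              rw [hfix, HahnSeries.coeff_sub, e1]
              have h2 : q - c < -v := by rw [hvcb]; linarith
              rw [hc2 _ h2, mul_zero, sub_zero, hcol, mlift_elt]
              rw [HahnSeries.coeff_single, if_neg (by linarith)]
          · rw [Function.update_of_ne hne]
            exact Rel_mlift _
        · -- the sum is zero
          have sum_update_sub : ∀ (f : Fin m → K 𝔽) (D : K 𝔽),
              (∑ i, Function.update f i₀ (f i₀ - D) i) = (∑ i, f i) - D := by
            intro f D
            rw [Finset.sum_update_of_mem (Finset.mem_univ i₀)]
            rw [Finset.sdiff_singleton_eq_erase]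
            rw [← Finset.add_sum_erase Finset.univ f (Finset.mem_univ i₀)]
            abel
          have key : (∑ i, mlift (a i) * Function.update (fun i => mlift (col i)) i₀ fix i)
              = S0 - mlift (a i₀) * (m0 * S0) := by
            have hfun : (fun i => mlift (a i) * Function.update (fun i => mlift (col i)) i₀ fix i)
                = Function.update (fun i => mlift (a i) * mlift (col i)) i₀
                    ((fun i => mlift (a i) * mlift (col i)) i₀ - mlift (a i₀) * (m0 * S0)) := by
              funext i
              rcases eq_or_ne i i₀ with rfl | hne
              · rw [Function.update_self, Function.update_self, hfix, mul_sub]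
              · rw [Function.update_of_ne hne, Function.update_of_ne hne]
            rw [hfun, sum_update_sub, ← hS0]
          rw [key, hai, mlift_elt]
          rw [hm0, ← mul_assoc, HahnSeries.single_mul_single, neg_add_cancel,
            mul_inv_cancel₀ hk, HahnSeries.single_zero_one, one_mul, sub_self]

-- === part 4 ===

lemma linDep_to_kernel {n : ℕ} (V : Fin n → Fin n → ELT ℝ 𝔽) (h : ELT.LinDep V) :
    ∃ H : Matrix (Fin n) (Fin n) (K 𝔽), (∀ i j, Rel (V i j) (H i j)) ∧ H.det = 0 := by
  classical
  obtain ⟨a, ha, ⟨i₁, hi₁⟩, hcond⟩ := h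
  have hcol : ∀ j : Fin n, ∃ h : Fin n → K 𝔽,
      (∀ i, Rel (V i j) (h i)) ∧ ∑ i, mlift (a i) * h i = 0 := fun j =>
    column_solve a ha (fun i => V i j) (hcond j)
  choose Hc hHc hker using hcol
  refine ⟨fun i j => Hc j i, fun i j => hHc j i, ?_⟩
  apply Matrix.exists_vecMul_eq_zero_iff.1
  refine ⟨fun i => mlift (a i), ?_, ?_⟩
  · intro hz
    apply hi₁
    have := congrFun hz i₁
    rw [Pi.zero_apply] at this
    cases hx : a i₁ with
    | bot => rfl
    | elt c k =>
      exfalso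
      rw [hx, mlift_elt] at this
      rcases ha i₁ with h' | h'
      · exact hi₁ h'
      · rw [hx] at h'
        exact h' (by rwa [HahnSeries.single_eq_zero_iff] at this)
  · funext j
    unfold Matrix.vecMul dotProduct
    exact hker j

lemma singular_of_linDep_rows {n : ℕ} (A : Matrix (Fin n) (Fin n) (ELT ℝ 𝔽))
    (h : ELT.LinDep fun i j => A i j) : ELT.s (ELT.det A) = 0 := by
  obtain ⟨H, hR, hdet⟩ := linDep_to_kernel _ h
  have := Rel_det A H hR
  rw [hdet] at this
  exact this.s_eq_zero

lemma singular_of_linDep_cols {n : ℕ} (A : Matrix (Fin n) (Fin n) (ELT ℝ 𝔽))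
    (h : ELT.LinDep fun j i => A i j) : ELT.s (ELT.det A) = 0 := by
  obtain ⟨H, hR, hdet⟩ := linDep_to_kernel _ h
  have := Rel_det A H.transpose (fun i j => hR j i)
  rw [Matrix.det_transpose, hdet] at this
  exact this.s_eq_zero

lemma linDep_of_detKernel {n : ℕ} (A : Matrix (Fin n) (Fin n) (ELT ℝ 𝔽))
    (H : Matrix (Fin n) (Fin n) (K 𝔽)) (hR : ∀ i j, Rel (A i j) (H i j))
    (hdet : H.det = 0) :
    (ELT.LinDep fun i j => A i j) ∧ (ELT.LinDep fun j i => A i j) := by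
  classical
  constructor
  · obtain ⟨u, hu, hker⟩ := Matrix.exists_vecMul_eq_zero_iff.2 hdet
    refine transfer_linDep _ (fun i j => H i j) hR u hu fun j => ?_
    have := congrFun hker j
    rwa [Matrix.vecMul, dotProduct, Pi.zero_apply] at this
  · obtain ⟨w, hw, hker⟩ := Matrix.exists_mulVec_eq_zero_iff.2 hdet
    refine transfer_linDep _ (fun j i => H i j) (fun j i => hR i j) w hw fun i => ?_
    have := congrFun hker i
    rw [Matrix.mulVec, dotProduct, Pi.zero_apply] at this
    rw [← this]
    exact Finset.sum_congr rfl fun j _ => mul_comm _ _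

-- === part 5a : order helpers, entry updates, rigidity ===

lemma le_order_of_vanish {x : K 𝔽} (hx : x ≠ 0) {c : ℝ} (h : ∀ q, q < c → x.coeff q = 0) :
    c ≤ x.order :=
  le_of_not_gt fun hlt => HahnSeries.coeff_order_eq_zero.not.2 hx (h _ hlt)

lemma order_add_eq_left {x y : K 𝔽} (hx : x ≠ 0)
    (hy : ∀ q, q ≤ x.order → y.coeff q = 0) :
    x + y ≠ 0 ∧ (x + y).order = x.order := by
  have hco : (x + y).coeff x.order = x.coeff x.order := by
    rw [HahnSeries.coeff_add, hy _ le_rfl, add_zero]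
  have hne : (x + y).coeff x.order ≠ 0 := by
    rw [hco]; exact HahnSeries.coeff_order_eq_zero.not.2 hx
  have hxy : x + y ≠ 0 := fun h => by rw [h] at hne; exact hne rfl
  refine ⟨hxy, le_antisymm (HahnSeries.order_le_of_coeff_ne_zero hne) ?_⟩
  refine le_order_of_vanish hxy fun q hq => ?_
  rw [HahnSeries.coeff_add, HahnSeries.coeff_eq_zero_of_lt_order hq, hy _ hq.le, add_zero]

lemma order_inv_mul {x : K 𝔽} (hx : x ≠ 0) {y : K 𝔽} (hy : y ≠ 0) :
    (x * y⁻¹).order = x.order - y.order := by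
  have hyi : y⁻¹ ≠ 0 := inv_ne_zero hy
  have h1 : (y * y⁻¹).order = 0 := by rw [mul_inv_cancel₀ hy, HahnSeries.order_one]
  rw [HahnSeries.order_mul hy hyi] at h1
  rw [HahnSeries.order_mul hx hyi]
  linarith

/-- Update a single entry of a matrix. -/
noncomputable def upd {n : ℕ} (L : Matrix (Fin n) (Fin n) (K 𝔽)) (i j : Fin n) (x : K 𝔽) :
    Matrix (Fin n) (Fin n) (K 𝔽) :=
  L.updateRow i (Function.update (L i) j x)

lemma upd_same {n : ℕ} (L : Matrix (Fin n) (Fin n) (K 𝔽)) (i j : Fin n) (x : K 𝔽) :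
    upd L i j x i j = x := by
  rw [upd, Matrix.updateRow_self, Function.update_self]

lemma upd_ne {n : ℕ} (L : Matrix (Fin n) (Fin n) (K 𝔽)) (i j : Fin n) (x : K 𝔽)
    {i' j' : Fin n} (h : (i', j') ≠ (i, j)) : upd L i j x i' j' = L i' j' := by
  rcases eq_or_ne i' i with rfl | hi
  · rcases eq_or_ne j' j with rfl | hj
    · exact absurd rfl h
    · rw [upd, Matrix.updateRow_self, Function.update_of_ne hj]
  · rw [upd, Matrix.updateRow_ne hi]

/-- The cofactor of entry `(i,j)`. -/
noncomputable def cof {n : ℕ} (L : Matrix (Fin n) (Fin n) (K 𝔽)) (i j : Fin n) : K 𝔽 :=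
  (L.updateRow i (Pi.single j 1)).det

lemma det_upd {n : ℕ} (L : Matrix (Fin n) (Fin n) (K 𝔽)) (i j : Fin n) (x : K 𝔽) :
    (upd L i j x).det = L.det + (x - L i j) * cof L i j := by
  have hrow : Function.update (L i) j x = L i + (x - L i j) • (Pi.single j 1 : Fin n → K 𝔽) := by
    funext k
    rcases eq_or_ne k j with rfl | hk
    · rw [Function.update_self, Pi.add_apply, Pi.smul_apply, Pi.single_eq_same, smul_eq_mul,
        mul_one, add_sub_cancel]
    · rw [Function.update_of_ne hk, Pi.add_apply, Pi.smul_apply, Pi.single_eq_of_ne hk,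
        smul_eq_mul, mul_zero, add_zero]
  rw [upd, hrow, Matrix.det_updateRow_add, Matrix.updateRow_eq_self, Matrix.det_updateRow_smul]
  rfl

/-- In a context with no vanishing-determinant lift, a single entry change preserves
the order of the determinant. -/
lemma rigid_step {n : ℕ} (A : Matrix (Fin n) (Fin n) (ELT ℝ 𝔽))
    (hno : ¬∃ H : Matrix (Fin n) (Fin n) (K 𝔽), (∀ i j, Rel (A i j) (H i j)) ∧ H.det = 0)
    (L L' : Matrix (Fin n) (Fin n) (K 𝔽))
    (hL : ∀ i j, Rel (A i j) (L i j)) (hL' : ∀ i j, Rel (A i j) (L' i j))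
    (i j : Fin n) (hdiff : ∀ i' j', (i', j') ≠ (i, j) → L i' j' = L' i' j') :
    L.det.order = L'.det.order := by
  have hLd : L.det ≠ 0 := fun h => hno ⟨L, hL, h⟩
  have hL'd : L'.det ≠ 0 := fun h => hno ⟨L', hL', h⟩
  have hmat : L' = upd L i j (L' i j) := by
    funext i' j'
    rcases eq_or_ne (i', j') (i, j) with heq | hne
    · obtain ⟨rfl, rfl⟩ := Prod.mk.injEq .. ▸ heq
      · rw [upd_same]
    · rw [upd_ne _ _ _ _ hne, hdiff _ _ hne]
  set Δ : K 𝔽 := L' i j - L i j with hΔ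
  have hdetL' : L'.det = L.det + Δ * cof L i j := by rw [hmat, det_upd]
  rcases eq_or_ne Δ 0 with hΔ0 | hΔ0
  · rw [hdetL', hΔ0, zero_mul, add_zero]
  rcases eq_or_ne (cof L i j) 0 with hc0 | hc0
  · rw [hdetL', hc0, mul_zero, add_zero]
  -- A i j must be an elt
  obtain ⟨b, ℓ, hA⟩ : ∃ b ℓ, A i j = ELT.elt b ℓ := by
    cases hA : A i j with
    | bot =>
      exfalso
      have h1 := hL i j; have h2 := hL' i j
      rw [hA] at h1 h2
      rw [Rel] at h1 h2
      rw [hΔ, h1, h2, sub_zero] at hΔ0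
      exact hΔ0 rfl
    | elt b ℓ => exact ⟨b, ℓ, rfl⟩
  have h1 := hL i j
  have h2 := hL' i j
  rw [hA] at h1 h2
  have hΔvan : ∀ q, q ≤ -b → Δ.coeff q = 0 := by
    intro q hq
    rw [hΔ, HahnSeries.coeff_sub]
    rcases eq_or_lt_of_le hq with rfl | hlt
    · rw [h1.1, h2.1, sub_self]
    · rw [h1.2 _ hlt, h2.2 _ hlt, sub_self]
  have hΔord : -b < Δ.order := by
    by_contra hcon
    exact HahnSeries.coeff_order_eq_zero.not.2 hΔ0 (hΔvan _ (not_lt.1 hcon))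
  rcases lt_or_ge L.det.order (Δ.order + (cof L i j).order) with hlt | hle
  · -- order preserved
    have hkey := order_add_eq_left (y := Δ * cof L i j) hLd ?_
    · rw [hdetL', hkey.2]
    · intro q hq
      apply HahnSeries.coeff_eq_zero_of_lt_order
      rw [HahnSeries.order_mul hΔ0 hc0]
      exact lt_of_le_of_lt hq hlt
  · -- construct a vanishing lift: contradiction
    exfalso
    set y : K 𝔽 := L.det * (cof L i j)⁻¹ with hy
    have hyne : y ≠ 0 := mul_ne_zero hLd (inv_ne_zero hc0)
    have hyord : -b < y.order := by
      rw [hy, order_inv_mul hLd hc0]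
      linarith
    set x : K 𝔽 := L i j - y with hx
    apply hno
    refine ⟨upd L i j x, ?_, ?_⟩
    · intro i' j'
      rcases eq_or_ne (i', j') (i, j) with heq | hne
      · obtain ⟨rfl, rfl⟩ : i' = i ∧ j' = j := Prod.mk.injEq .. ▸ heq
        rw [upd_same, hA]
        constructor
        · rw [hx, HahnSeries.coeff_sub, h1.1,
            HahnSeries.coeff_eq_zero_of_lt_order hyord, sub_zero]
        · intro q hq
          rw [hx, HahnSeries.coeff_sub, h1.2 _ hq,
            HahnSeries.coeff_eq_zero_of_lt_order (hq.trans hyord), sub_zero]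
      · rw [upd_ne _ _ _ _ hne]
        exact hL i' j'
    · rw [det_upd, hx]
      have h4 : y * cof L i j = L.det := by
        rw [hy, mul_assoc, inv_mul_cancel₀ hc0, mul_one]
      have h3 : (L i j - y - L i j) * cof L i j = -L.det := by
        calc (L i j - y - L i j) * cof L i j = -(y * cof L i j) := by ring
        _ = -L.det := by rw [h4]
      rw [h3, add_neg_cancel]

-- === part 5b : rigidity chain, attainment ===

lemma rigid {n : ℕ} (A : Matrix (Fin n) (Fin n) (ELT ℝ 𝔽))
    (hno : ¬∃ H : Matrix (Fin n) (Fin n) (K 𝔽), (∀ i j, Rel (A i j) (H i j)) ∧ H.det = 0)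
    (L L' : Matrix (Fin n) (Fin n) (K 𝔽))
    (hL : ∀ i j, Rel (A i j) (L i j)) (hL' : ∀ i j, Rel (A i j) (L' i j)) :
    L.det.order = L'.det.order := by
  classical
  have main : ∀ (D : Finset ((Fin n) × (Fin n))) (L L' : Matrix (Fin n) (Fin n) (K 𝔽)),
      (∀ i j, Rel (A i j) (L i j)) → (∀ i j, Rel (A i j) (L' i j)) →
      (∀ p : (Fin n) × (Fin n), p ∉ D → L p.1 p.2 = L' p.1 p.2) →
      L.det.order = L'.det.order := by
    intro D
    induction D using Finset.induction_on with
    | empty =>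
      intro L L' _ _ h
      have : L = L' := by
        funext i j
        exact h (i, j) (Finset.notMem_empty _)
      rw [this]
    | @insert p D' hp ih =>
      intro L L' hL hL' h
      set L'' := upd L p.1 p.2 (L' p.1 p.2) with hL''def
      have hL'' : ∀ i j, Rel (A i j) (L'' i j) := by
        intro i j
        rcases eq_or_ne (i, j) (p.1, p.2) with heq | hne
        · obtain ⟨rfl, rfl⟩ : i = p.1 ∧ j = p.2 := Prod.mk.injEq .. ▸ heq
          rw [hL''def, upd_same]
          exact hL' _ _
        · rw [hL''def, upd_ne _ _ _ _ hne]
          exact hL _ _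
      have step1 : L.det.order = L''.det.order := by
        refine rigid_step A hno L L'' hL hL'' p.1 p.2 fun i' j' hne => ?_
        rw [hL''def, upd_ne _ _ _ _ hne]
      have step2 : L''.det.order = L'.det.order := by
        refine ih L'' L' hL'' hL' fun q hq => ?_
        rcases eq_or_ne q (p.1, p.2) with rfl | hne
        · rw [hL''def, upd_same]
        · have hq' : q ∉ insert p D' := by
            simp only [Finset.mem_insert, not_or]
            refine ⟨?_, hq⟩
            intro hqp
            exact hne (by rw [hqp])
          rw [hL''def, upd_ne _ _ _ _ hne, h q hq']
      rw [step1, step2]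
  exact main Finset.univ L L' hL hL' fun p hp => absurd (Finset.mem_univ p) hp

lemma t_one : ELT.t (1 : ELT ℝ 𝔽) = ((0:ℝ) : WithBot ℝ) := rfl

lemma t_listProd {m : ℕ} (f : Fin m → ELT ℝ 𝔽) :
    ELT.t ((List.ofFn f).prod) = ∑ i, ELT.t (f i) := by
  induction m with
  | zero => simp [t_one]
  | succ m ih =>
    rw [List.ofFn_succ, List.prod_cons, t_mul, ih, Fin.sum_univ_succ]

lemma withbot_coe_sum {m : ℕ} (b : Fin m → ℝ) (s : Finset (Fin m)) :
    ∑ i ∈ s, ((b i : WithBot ℝ)) = ((∑ i ∈ s, b i : ℝ) : WithBot ℝ) := by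
  classical
  induction s using Finset.induction_on with
  | empty => simp
  | @insert a s ha ih =>
    rw [Finset.sum_insert ha, Finset.sum_insert ha, ih, WithBot.coe_add]

lemma withbot_sum_exists {m : ℕ} (g : Fin m → WithBot ℝ) (r : ℝ)
    (h : ∑ i, g i = (r : WithBot ℝ)) :
    ∃ b : Fin m → ℝ, (∀ i, g i = ((b i : ℝ) : WithBot ℝ)) ∧ ∑ i, b i = r := by
  classical
  have hne : ∀ i, g i ≠ ⊥ := by
    intro i hbot
    rw [← Finset.add_sum_erase Finset.univ g (Finset.mem_univ i), hbot] at h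
    rw [WithBot.bot_add] at h
    exact WithBot.bot_ne_coe h
  choose b hb using fun i => WithBot.ne_bot_iff_exists.1 (hne i)
  refine ⟨b, fun i => (hb i).symm, ?_⟩
  have : ∑ i, g i = ((∑ i, b i : ℝ) : WithBot ℝ) := by
    rw [← withbot_coe_sum]
    exact Finset.sum_congr rfl fun i _ => (hb i).symm
  rw [h] at this
  exact_mod_cast this.symm

lemma exists_maxperm {n : ℕ} (A : Matrix (Fin n) (Fin n) (ELT ℝ 𝔽)) (r : ℝ)
    (hdet : ELT.t (ELT.det A) = ((r : ℝ) : WithBot ℝ)) :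
    ∃ (σ : Equiv.Perm (Fin n)) (b : Fin n → ℝ),
      (∀ i, ELT.t (A i (σ i)) = ((b i : ℝ) : WithBot ℝ)) ∧ ∑ i, b i = r := by
  have hnb : ELT.det A ≠ ELT.bot := by
    intro h
    rw [h] at hdet
    exact WithBot.bot_ne_coe hdet
  rcases t_listSum_attain (((Finset.univ : Finset (Equiv.Perm (Fin n))).toList.map fun σ =>
      ELT.elt 0 (((Equiv.Perm.sign σ : ℤˣ) : ℤ) : 𝔽) * (List.ofFn fun i => A i (σ i)).prod))
    with hbot | ⟨x, hx, hxx⟩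
  · exact absurd hbot hnb
  · obtain ⟨σ, _, rfl⟩ := List.mem_map.1 hx
    rw [show ELT.det A = (((Finset.univ : Finset (Equiv.Perm (Fin n))).toList.map fun σ =>
      ELT.elt 0 (((Equiv.Perm.sign σ : ℤˣ) : ℤ) : 𝔽) * (List.ofFn fun i => A i (σ i)).prod)).sum
      from rfl] at hdet
    rw [hxx, t_mul, t_listProd] at hdet
    rw [show ELT.t (ELT.elt 0 ((((Equiv.Perm.sign σ : ℤˣ) : ℤ)) : 𝔽)) = ((0:ℝ) : WithBot ℝ)
      from rfl] at hdet
    rw [WithBot.coe_zero, zero_add] at hdet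
    obtain ⟨b, hb, hbs⟩ := withbot_sum_exists _ r hdet
    exact ⟨σ, b, hb, hbs⟩

-- === part 5c : the greedy cube ===

/-- Mixed matrix: rows in `S` are pure perturbation rows, the others are the
monomial lift plus (according to `v`) the perturbation. -/
noncomputable def MixM {n : ℕ} (H0 Y : Matrix (Fin n) (Fin n) (K 𝔽)) (S : Finset (Fin n))
    (v : Fin n → Bool) : Matrix (Fin n) (Fin n) (K 𝔽) :=
  fun i j => if i ∈ S then Y i j else if v i then H0 i j + Y i j else H0 i j

lemma greedy_cube {n : ℕ} (H0 Y : Matrix (Fin n) (Fin n) (K 𝔽)) (q : ℝ) :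
    ∀ (m : ℕ) (S : Finset (Fin n)), S.card = m →
    (∃ v, ((MixM H0 Y S v).det.coeff q ≠ 0)) →
    ∃ v, ((MixM H0 Y ∅ v).det.coeff q ≠ 0) := by
  intro m
  induction m with
  | zero =>
    intro S hS hex
    rw [Finset.card_eq_zero.1 hS] at hex
    exact hex
  | succ m ih =>
    intro S hS ⟨v, hv⟩
    obtain ⟨i, hi⟩ := Finset.card_pos.1 (by rw [hS]; exact Nat.succ_pos m)
    set N := MixM H0 Y S v with hN
    have key1 : MixM H0 Y (S.erase i) (Function.update v i true)
        = N.updateRow i (H0 i + Y i) := by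
      funext i' j
      rcases eq_or_ne i' i with rfl | hne
      · rw [Matrix.updateRow_self, MixM]
        rw [if_neg (Finset.notMem_erase i' S), Function.update_self, if_pos rfl]
        rfl
      · rw [Matrix.updateRow_ne hne, hN, MixM, MixM]
        simp only [Finset.mem_erase, hne, ne_eq, not_false_iff, true_and,
          Function.update_of_ne hne]
    have key2 : MixM H0 Y (S.erase i) (Function.update v i false)
        = N.updateRow i (H0 i) := by
      funext i' j
      rcases eq_or_ne i' i with rfl | hne
      · rw [Matrix.updateRow_self, MixM]
        rw [if_neg (Finset.notMem_erase i' S), Function.update_self, if_neg Bool.false_ne_true]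
      · rw [Matrix.updateRow_ne hne, hN, MixM, MixM]
        simp only [Finset.mem_erase, hne, ne_eq, not_false_iff, true_and,
          Function.update_of_ne hne]
    have keyY : N.updateRow i (Y i) = N := by
      have : Y i = N i := by
        funext j
        rw [hN, MixM, if_pos hi]
      rw [this, Matrix.updateRow_eq_self]
    have hsplit : (N.updateRow i (H0 i + Y i)).det
        = (N.updateRow i (H0 i)).det + N.det := by
      rw [Matrix.det_updateRow_add, keyY]
    have hone : (MixM H0 Y (S.erase i) (Function.update v i true)).det.coeff q ≠ 0 ∨
        (MixM H0 Y (S.erase i) (Function.update v i false)).det.coeff q ≠ 0 := by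
      by_contra hcon
      push_neg at hcon
      obtain ⟨hc1, hc2⟩ := hcon
      rw [key1, hsplit] at hc1
      rw [key2] at hc2
      rw [HahnSeries.coeff_add, hc2, zero_add] at hc1
      exact hv hc1
    have hcard : (S.erase i).card = m := by
      rw [Finset.card_erase_of_mem hi, hS]
      rfl
    rcases hone with h | h
    · exact ih (S.erase i) hcard ⟨_, h⟩
    · exact ih (S.erase i) hcard ⟨_, h⟩

lemma prod_single_one {n : ℕ} (c : Fin n → ℝ) :
    (∏ i, HahnSeries.single (c i) (1:𝔽)) = HahnSeries.single (∑ i, c i) (1:𝔽) := by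
  classical
  induction (Finset.univ : Finset (Fin n)) using Finset.induction_on with
  | empty => simp [HahnSeries.single_zero_one]
  | @insert a s ha ih =>
    rw [Finset.prod_insert ha, Finset.sum_insert ha, ih, HahnSeries.single_mul_single, one_mul]

-- === part 5d : existence of a vanishing lift for singular matrices ===

lemma exists_vanishing_lift {n : ℕ} (A : Matrix (Fin n) (Fin n) (ELT ℝ 𝔽))
    (hsing : ELT.s (ELT.det A) = 0) :
    ∃ H : Matrix (Fin n) (Fin n) (K 𝔽), (∀ i j, Rel (A i j) (H i j)) ∧ H.det = 0 := by
  classical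
  by_contra hno
  have hdne : ∀ L : Matrix (Fin n) (Fin n) (K 𝔽),
      (∀ i j, Rel (A i j) (L i j)) → L.det ≠ 0 := fun L hL h => hno ⟨L, hL, h⟩
  set H0 : Matrix (Fin n) (Fin n) (K 𝔽) := fun i j => mlift (A i j) with hH0
  have hH0R : ∀ i j, Rel (A i j) (H0 i j) := fun i j => Rel_mlift _
  have hRdet := Rel_det A H0 hH0R
  cases hdetA : ELT.det A with
  | bot =>
    rw [hdetA] at hRdet
    exact hdne H0 hH0R hRdet
  | elt r μ =>
    have hμ : μ = 0 := by rw [hdetA] at hsing; exact hsing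
    rw [hdetA, hμ] at hRdet
    obtain ⟨hco, hvan⟩ := hRdet
    have hd0 : H0.det ≠ 0 := hdne H0 hH0R
    set d : ℝ := H0.det.order with hd
    have hdge : -r ≤ d := le_order_of_vanish hd0 hvan
    have hdgt : -r < d := by
      rcases lt_or_eq_of_le hdge with h | h
      · exact h
      · exfalso
        apply HahnSeries.coeff_order_eq_zero.not.2 hd0
        rw [← hd, ← h]
        exact hco
    -- the maximizing permutation
    have hdetAt : ELT.t (ELT.det A) = ((r : ℝ) : WithBot ℝ) := by rw [hdetA]; rfl
    obtain ⟨σ, b, hb, hbs⟩ := exists_maxperm A r hdetAt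
    have hAσ : ∀ i, ∃ ℓ, A i (σ i) = ELT.elt (b i) ℓ := by
      intro i
      cases hA : A i (σ i) with
      | bot =>
        exfalso
        have hbi := hb i
        rw [hA] at hbi
        exact WithBot.bot_ne_coe hbi
      | elt b' ℓ' =>
        refine ⟨ℓ', ?_⟩
        have : ((b' : ℝ) : WithBot ℝ) = ((b i : ℝ) : WithBot ℝ) := by
          rw [← hb i, hA]; rfl
        rw [WithBot.coe_inj] at this
        rw [this]
    choose ℓσ hℓσ using hAσ
    -- the perturbation parameters
    set ε : ℝ := (d + r) / (n + 1) with hε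
    have hn1 : (0:ℝ) < (n:ℝ) + 1 := by positivity
    have hεpos : 0 < ε := div_pos (by linarith) hn1
    set q : ℝ := -r + n * ε with hq
    have hqlt : q < d := by
      have h1 : ((n:ℝ) + 1) * ε = d + r := by
        rw [hε, mul_div_cancel₀ _ (ne_of_gt hn1)]
      have h2 : (n:ℝ) * ε < ((n:ℝ) + 1) * ε := by
        apply mul_lt_mul_of_pos_right _ hεpos
        linarith
      rw [hq]
      linarith
    -- the perturbation matrix
    set Y : Matrix (Fin n) (Fin n) (K 𝔽) := fun i j =>
      if σ i = j then HahnSeries.single (-(b i) + ε) (1:𝔽) else 0 with hY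
    set dg : Fin n → K 𝔽 := fun i => HahnSeries.single (-(b i) + ε) (1:𝔽) with hdg
    have hYfac : Y = Matrix.diagonal dg * σ.permMatrix (K 𝔽) := by
      funext i j
      rw [Matrix.diagonal_mul]
      simp only [hY, hdg, Equiv.Perm.permMatrix, PEquiv.toMatrix_apply,
        Equiv.toPEquiv_apply, Option.mem_def, Option.some.injEq]
      by_cases h : σ i = j
      · rw [if_pos h, if_pos h, mul_one]
      · rw [if_neg h, if_neg h, mul_zero]
    have hsumc : ∑ i, (-(b i) + ε) = q := by
      rw [Finset.sum_add_distrib, Finset.sum_neg_distrib, Finset.sum_const,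
        Finset.card_univ, Fintype.card_fin, hbs, hq, nsmul_eq_mul]
    have hYdet : Y.det.coeff q ≠ 0 := by
      rw [hYfac, Matrix.det_mul, Matrix.det_diagonal, Matrix.det_permutation]
      rw [show (∏ i, dg i) = HahnSeries.single q (1:𝔽) by rw [hdg, prod_single_one, hsumc]]
      have hcast : ((Equiv.Perm.sign σ : ℤˣ) : K 𝔽) =
          HahnSeries.single (0:ℝ) (((Equiv.Perm.sign σ : ℤˣ) : ℤ) : 𝔽) := by
        rw [show ((Equiv.Perm.sign σ : ℤˣ) : K 𝔽) = (((Equiv.Perm.sign σ : ℤˣ) : ℤ) : K 𝔽)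
          from rfl]
        rw [← map_intCast (HahnSeries.C : 𝔽 →+* K 𝔽) ((Equiv.Perm.sign σ : ℤˣ) : ℤ)]
        rfl
      rw [hcast, HahnSeries.single_mul_single, add_zero, one_mul, HahnSeries.coeff_single_same]
      rcases Int.units_eq_one_or (Equiv.Perm.sign σ) with h | h <;> rw [h]
      · simp
      · simp
    -- greedy descent
    have hstart : ∃ v, ((MixM H0 Y Finset.univ v).det.coeff q ≠ 0) := by
      refine ⟨fun _ => false, ?_⟩
      rw [show MixM H0 Y Finset.univ (fun _ => false) = Y by
        funext i j; rw [MixM, if_pos (Finset.mem_univ i)]]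
      exact hYdet
    obtain ⟨v, hv⟩ := greedy_cube H0 Y q Finset.univ.card Finset.univ rfl hstart
    -- the final lift
    set L : Matrix (Fin n) (Fin n) (K 𝔽) := MixM H0 Y ∅ v with hLdef
    have hLR : ∀ i j, Rel (A i j) (L i j) := by
      intro i j
      rw [hLdef, MixM, if_neg (Finset.notMem_empty i)]
      by_cases hvi : v i = true
      · rw [if_pos hvi]
        by_cases hj : σ i = j
        · have hYi : Y i (σ i) = HahnSeries.single (-(b i) + ε) (1:𝔽) := by
            simp [hY]
          have hH0i : H0 i (σ i) = HahnSeries.single (-(b i)) (ℓσ i) := by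
            simp [hH0, hℓσ i]
          rw [← hj, hYi, hH0i, hℓσ i]
          constructor
          · rw [HahnSeries.coeff_add, HahnSeries.coeff_single_same,
              HahnSeries.coeff_single, if_neg (by intro hh; linarith), add_zero]
          · intro p hp
            rw [HahnSeries.coeff_add, HahnSeries.coeff_single, if_neg (by linarith),
              HahnSeries.coeff_single, if_neg (by intro hh; nlinarith [hεpos]), add_zero]
        · have hYi0 : Y i j = 0 := by
            simp [hY, hj]
          rw [hYi0, add_zero]
          exact hH0R i j
      · rw [if_neg hvi]
        exact hH0R i j
    have hrig := rigid A hno L H0 hLR hH0R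
    have hle : L.det.order ≤ q := HahnSeries.order_le_of_coeff_ne_zero hv
    rw [hrig, ← hd] at hle
    linarith

end ELTProof


/-- The rows of `A` are linearly dependent iff the columns of `A` are linearly
dependent iff `A` is singular, i.e. `s(det A) = 0`. -/
theorem stmt7 {𝔽 : Type} [Field 𝔽] [IsAlgClosed 𝔽] {n : ℕ}
    (A : Matrix (Fin n) (Fin n) (ELT ℝ 𝔽)) :
    (ELT.LinDep (fun i j => A i j) ↔ ELT.s (ELT.det A) = 0) ∧
    (ELT.LinDep (fun j i => A i j) ↔ ELT.s (ELT.det A) = 0) := by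
  constructor
  · constructor
    · exact ELTProof.singular_of_linDep_rows A
    · intro hsing
      obtain ⟨H, hR, hdet⟩ := ELTProof.exists_vanishing_lift A hsing
      exact (ELTProof.linDep_of_detKernel A H hR hdet).1
  · constructor
    · exact ELTProof.singular_of_linDep_cols A
    · intro hsing
      obtain ⟨H, hR, hdet⟩ := ELTProof.exists_vanishing_lift A hsing
      exact (ELTProof.linDep_of_detKernel A H hR hdet).2
end

section
/- Let 𝓡 = 𝓡(ℝ,ℂ) and let ⟨·,·⟩ be an ELT inner product on 𝓡̄ⁿ. If u₁, u₂, v₁, v₂ ∈ 𝓡̄ⁿ satisfy t(u₁) = t(u₂) and t(v₁) = t(v₂) entrywise, then t(⟨u₁,v₁⟩) = t(⟨u₂,v₂⟩). -/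
namespace ELT

/-- The ELT conjugate on `𝓡(ℝ,ℂ) ∪ {−∞}`. -/
def econj : ELT ℝ ℂ → ELT ℝ ℂ
  | bot => bot
  | elt a ℓ => elt a (starRingEnd ℂ ℓ)

end ELT

/-- An ELT inner product on `𝓡̄ⁿ` over `𝓡 = 𝓡(ℝ,ℂ)`. -/
structure ELTInnerProduct (n : ℕ) where
  /-- the underlying pairing -/
  inner : (Fin n → ELT ℝ ℂ) → (Fin n → ELT ℝ ℂ) → ELT ℝ ℂ
  /-- linearity in the first argument: `⟨av + bu, w⟩ = a⟨v,w⟩ + b⟨u,w⟩` -/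
  linear : ∀ (a b : ELT ℝ ℂ) (v u w : Fin n → ELT ℝ ℂ),
    inner (fun i => a * v i + b * u i) w = a * inner v w + b * inner u w
  /-- conjugate symmetry -/
  conj_symm : ∀ u v : Fin n → ELT ℝ ℂ, inner v u = ELT.econj (inner u v)
  /-- `s(⟨v,v⟩)` is a nonnegative real number -/
  layer_nonneg : ∀ v : Fin n → ELT ℝ ℂ,
    0 ≤ (ELT.s (inner v v)).re ∧ (ELT.s (inner v v)).im = 0
  /-- for `v` with entries in `𝓡^× ∪ {−∞}`, `s(⟨v,v⟩) = 0` iff `v = (−∞,…,−∞)` -/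
  definite : ∀ v : Fin n → ELT ℝ ℂ, (∀ i, ELT.TangibleOrBot (v i)) →
    (ELT.s (inner v v) = 0 ↔ v = fun _ => ELT.bot)

namespace ELT

/-- Ghost of an element: same tangible value, layer `0`. -/
def ghost : ELT ℝ ℂ → ELT ℝ ℂ
  | bot => bot
  | elt a _ => elt a 0

lemma combo_eq_ghost (x : ELT ℝ ℂ) :
    elt 0 1 * x + elt 0 (-1) * x = ghost x := by
  cases x with
  | bot => rfl
  | elt a ℓ =>
      show (if (0 : ℝ) + a < 0 + a then _ else if (0 : ℝ) + a < 0 + a then _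
        else elt ((0 : ℝ) + a) ((1 : ℂ) * ℓ + (-1) * ℓ)) = ghost (elt a ℓ)
      simp [ghost]

lemma t_ghost (x : ELT ℝ ℂ) : t (ghost x) = t x := by
  cases x <;> rfl

lemma ghost_eq_of_t_eq {x y : ELT ℝ ℂ} (h : t x = t y) : ghost x = ghost y := by
  cases x with
  | bot => cases y with
    | bot => rfl
    | elt b k => simp [t] at h
  | elt a ℓ => cases y with
    | bot => simp [t] at h
    | elt b k =>
        simp only [t, WithBot.coe_inj] at h
        simp [ghost, h]

lemma t_econj (x : ELT ℝ ℂ) : t (econj x) = t x := by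
  cases x <;> rfl

end ELT

lemma inner_t_left {n : ℕ} (P : ELTInnerProduct n) (u₁ u₂ v : Fin n → ELT ℝ ℂ)
    (hu : ∀ i, ELT.t (u₁ i) = ELT.t (u₂ i)) :
    ELT.t (P.inner u₁ v) = ELT.t (P.inner u₂ v) := by
  have key : ∀ u : Fin n → ELT ℝ ℂ,
      ELT.t (P.inner (fun i => ELT.ghost (u i)) v) = ELT.t (P.inner u v) := by
    intro u
    have h := P.linear (ELT.elt 0 1) (ELT.elt 0 (-1)) u u v
    have h2 : (fun i => ELT.elt 0 1 * u i + ELT.elt 0 (-1) * u i)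
        = fun i => ELT.ghost (u i) := funext fun i => ELT.combo_eq_ghost (u i)
    rw [h2] at h
    rw [h, ELT.combo_eq_ghost (P.inner u v), ELT.t_ghost]
  have hg : (fun i => ELT.ghost (u₁ i)) = fun i => ELT.ghost (u₂ i) :=
    funext fun i => ELT.ghost_eq_of_t_eq (hu i)
  rw [← key u₁, ← key u₂, hg]

/-- The tangible value of an ELT inner product only depends on the tangible
values of its arguments. -/
theorem stmt14 {n : ℕ} (P : ELTInnerProduct n) (u₁ u₂ v₁ v₂ : Fin n → ELT ℝ ℂ)
    (hu : ∀ i, ELT.t (u₁ i) = ELT.t (u₂ i))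
    (hv : ∀ i, ELT.t (v₁ i) = ELT.t (v₂ i)) :
    ELT.t (P.inner u₁ v₁) = ELT.t (P.inner u₂ v₂) := by
  calc ELT.t (P.inner u₁ v₁) = ELT.t (P.inner u₂ v₁) := inner_t_left P u₁ u₂ v₁ hu
    _ = ELT.t (ELT.econj (P.inner v₁ u₂)) := by rw [P.conj_symm]
    _ = ELT.t (P.inner v₁ u₂) := ELT.t_econj _
    _ = ELT.t (P.inner v₂ u₂) := inner_t_left P v₁ v₂ u₂ hv
    _ = ELT.t (ELT.econj (P.inner v₂ u₂)) := (ELT.t_econj _).symm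
    _ = ELT.t (P.inner u₂ v₂) := by rw [← P.conj_symm]
end

section
/- (ELT Cauchy–Schwarz inequality) Let 𝓡 = 𝓡(ℝ,ℂ) and let ⟨·,·⟩ be an ELT inner product on 𝓡̄ⁿ. Then for all u, v ∈ 𝓡̄ⁿ: t(⟨u,v⟩²) ≤ t(⟨u,u⟩·⟨v,v⟩), i.e. 2·t(⟨u,v⟩) ≤ t(⟨u,u⟩) + t(⟨v,v⟩) in ℝ ∪ {−∞}. -/
namespace ELTCS
open ELT

abbrev R := ELT ℝ ℂ

lemma bot_mul (x : R) : (ELT.bot : R) * x = ELT.bot := by cases x <;> rfl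
lemma mul_bot (x : R) : x * (ELT.bot : R) = ELT.bot := by cases x <;> rfl
lemma bot_add (x : R) : (ELT.bot : R) + x = x := by cases x <;> rfl
lemma add_bot (x : R) : x + (ELT.bot : R) = x := by cases x <;> rfl
lemma one_mul' (x : R) : (ELT.elt 0 1 : R) * x = x := by
  cases x with
  | bot => rfl
  | elt a l => show ELT.elt (0 + a) (1 * l) = _ ; rw [zero_add, one_mul]
lemma mul_one' (x : R) : x * (ELT.elt 0 1 : R) = x := by
  cases x with
  | bot => rfl
  | elt a l => show ELT.elt (a + 0) (l * 1) = _ ; rw [add_zero, mul_one]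
lemma elt_mul (a b : ℝ) (l k : ℂ) :
    (ELT.elt a l : R) * ELT.elt b k = ELT.elt (a + b) (l * k) := rfl

lemma add_lt (a b : ℝ) (l k : ℂ) (h : a < b) :
    (ELT.elt a l : R) + ELT.elt b k = ELT.elt b k := by
  show (if a < b then _ else _) = _
  rw [if_pos h]
lemma add_gt (a b : ℝ) (l k : ℂ) (h : b < a) :
    (ELT.elt a l : R) + ELT.elt b k = ELT.elt a l := by
  show (if a < b then _ else _) = _
  rw [if_neg (not_lt.mpr h.le), if_pos h]
lemma add_eq (a : ℝ) (l k : ℂ) :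
    (ELT.elt a l : R) + ELT.elt a k = ELT.elt a (l + k) := by
  show (if a < a then _ else _) = _
  rw [if_neg (lt_irrefl a), if_neg (lt_irrefl a)]

lemma t_mul (x y : R) : ELT.t (x * y) = ELT.t x + ELT.t y := by
  cases x <;> cases y <;> simp [ELT.t, elt_mul, bot_mul, mul_bot]

lemma t_add (x y : R) : ELT.t (x + y) = max (ELT.t x) (ELT.t y) := by
  cases x with
  | bot => rw [bot_add]; simp [ELT.t]
  | elt a l =>
    cases y with
    | bot => rw [add_bot]; simp [ELT.t]
    | elt b k =>
      rcases lt_trichotomy a b with h | h | h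
      · rw [add_lt _ _ _ _ h]; simp [ELT.t, le_of_lt h, max_eq_right, WithBot.coe_le_coe, h.le]
      · subst h; rw [add_eq]; simp [ELT.t]
      · rw [add_gt _ _ _ _ h]; simp [ELT.t, max_eq_left, WithBot.coe_le_coe, h.le]

lemma econj_econj (x : R) : econj (econj x) = x := by
  cases x <;> simp [econj]
lemma t_econj (x : R) : ELT.t (econj x) = ELT.t x := by
  cases x <;> rfl
lemma econj_mul (x y : R) : econj (x * y) = econj x * econj y := by
  cases x <;> cases y <;> simp [econj, elt_mul, bot_mul, mul_bot, map_mul]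
lemma econj_add (x y : R) : econj (x + y) = econj x + econj y := by
  cases x with
  | bot => rw [bot_add, econj, bot_add]
  | elt a l =>
    cases y with
    | bot => rw [add_bot]; show _ = econj _ + ELT.bot; rw [add_bot]
    | elt b k =>
      rcases lt_trichotomy a b with h | h | h
      · rw [add_lt _ _ _ _ h]; show _ = ELT.elt a _ + ELT.elt b _; rw [add_lt _ _ _ _ h]; rfl
      · subst h; rw [add_eq]; show ELT.elt a _ = ELT.elt a _ + ELT.elt a _; rw [add_eq, map_add]
      · rw [add_gt _ _ _ _ h]; show _ = ELT.elt a _ + ELT.elt b _; rw [add_gt _ _ _ _ h]; rfl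

end ELTCS
namespace ELTCS
open ELT

/-- partial sums of a sequence in `R` -/
noncomputable def S (f : ℕ → R) : ℕ → R
  | 0 => ELT.bot
  | m + 1 => S f m + f m

lemma S_zero (f : ℕ → R) : S f 0 = ELT.bot := rfl
lemma S_succ (f : ℕ → R) (m : ℕ) : S f (m + 1) = S f m + f m := rfl

lemma t_le_S (f : ℕ → R) (m : ℕ) : ∀ j < m, ELT.t (f j) ≤ ELT.t (S f m) := by
  induction m with
  | zero => intro j hj; omega
  | succ m ih =>
    intro j hj
    rw [S_succ, t_add]
    rcases Nat.lt_succ_iff_lt_or_eq.mp hj with h | h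
    · exact le_trans (ih j h) (le_max_left _ _)
    · subst h; exact le_max_right _ _
lemma S_witness (f : ℕ → R) (m : ℕ) :
    ELT.t (S f m) = ⊥ ∨ ∃ j < m, ELT.t (S f m) = ELT.t (f j) := by
  induction m with
  | zero => left; rfl
  | succ m ih =>
    rw [S_succ, t_add]
    rcases max_cases (ELT.t (S f m)) (ELT.t (f m)) with ⟨h1, _⟩ | ⟨h1, _⟩
    · rw [h1]
      rcases ih with h | ⟨j, hj, hje⟩
      · left; exact h
      · right; exact ⟨j, Nat.lt_succ_of_lt hj, hje⟩
    · right; exact ⟨m, Nat.lt_succ_self m, h1⟩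

variable {n : ℕ} (P : ELTInnerProduct n)

/-- `j`-th standard basis vector -/
def e (j : Fin n) : Fin n → R := fun i => if i = j then ELT.elt 0 1 else ELT.bot

lemma inner_zero (w : Fin n → R) : P.inner (fun _ => ELT.bot) w = ELT.bot := by
  have h := P.linear ELT.bot ELT.bot w w w
  simp only [bot_mul, bot_add] at h
  exact h

/-- coefficient sequence of `u` -/
def coeffs (u : Fin n → R) (w : Fin n → R) : ℕ → R := fun j =>
  if h : j < n then u ⟨j, h⟩ * P.inner (e ⟨j, h⟩) w else ELT.bot

lemma expand_aux (u w : Fin n → R) :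
    ∀ m, m ≤ n →
      P.inner (fun i => if i.val < m then u i else ELT.bot) w = S (coeffs P u w) m := by
  intro m
  induction m with
  | zero =>
    intro _
    simpa [S_zero] using inner_zero P w
  | succ m ih =>
    intro hm
    have hmn : m < n := hm
    have hvec : (fun i : Fin n => if i.val < m + 1 then u i else ELT.bot)
        = fun i => (ELT.elt 0 1 : R) * (if i.val < m then u i else ELT.bot)
            + u ⟨m, hmn⟩ * e ⟨m, hmn⟩ i := by
      funext i
      by_cases h1 : i.val < m
      · have h2 : i ≠ ⟨m, hmn⟩ := by
          intro h; rw [h] at h1; exact absurd h1 (lt_irrefl m)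
        simp [h1, Nat.lt_succ_of_lt h1, e, h2, one_mul', mul_bot, add_bot]
      · by_cases h3 : i.val = m
        · have h4 : i = ⟨m, hmn⟩ := Fin.ext h3
          simp [h1, h3, h4, e, mul_bot, mul_one', bot_add, Nat.lt_succ_self]
        · have h5 : ¬ i.val < m + 1 := by omega
          have h2 : i ≠ ⟨m, hmn⟩ := by
            intro h; rw [h] at h3; exact h3 rfl
          simp [h1, h5, e, h2, mul_bot, add_bot]
    rw [hvec, P.linear, one_mul', ih (le_of_lt hmn), S_succ]
    congr 1
    rw [coeffs, dif_pos hmn]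

lemma expand (u w : Fin n → R) : P.inner u w = S (coeffs P u w) n := by
  have h := expand_aux P u w n (le_refl n)
  simpa using h

end ELTCS
namespace ELTCS
open ELT

variable {n : ℕ} (P : ELTInnerProduct n)

lemma e_tangible (j : Fin n) : ∀ i, TangibleOrBot (e j i) := by
  intro i
  by_cases h : i = j
  · right; simp [e, h, ELT.s]
  · left; simp [e, h]

lemma e_ne_bot (j : Fin n) : e j ≠ fun _ => (ELT.bot : R) := by
  intro h
  have := congrFun h j
  simp [e] at this

lemma diag (j : Fin n) : ∃ (α : ℝ) (d : ℂ),
    P.inner (e j) (e j) = ELT.elt α d ∧ 0 < d.re ∧ d.im = 0 := by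
  have hdef := (P.definite (e j) (e_tangible j))
  have hs : ELT.s (P.inner (e j) (e j)) ≠ 0 := by
    intro h
    exact e_ne_bot j (hdef.mp h)
  have hl := P.layer_nonneg (e j)
  cases hD : P.inner (e j) (e j) with
  | bot => rw [hD] at hs; exact absurd rfl hs
  | elt α d =>
    refine ⟨α, d, rfl, ?_, ?_⟩
    · rw [hD] at hs hl
      simp only [ELT.s] at hs hl
      rcases lt_or_eq_of_le hl.1 with h | h
      · exact h
      · exfalso; apply hs; apply Complex.ext <;> simp [← h, hl.2]
    · rw [hD] at hl; exact hl.2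

lemma econj_diag (j : Fin n) : econj (P.inner (e j) (e j)) = P.inner (e j) (e j) :=
  (P.conj_symm (e j) (e j)).symm

lemma pair (j k : Fin n) :
    ELT.t (P.inner (e j) (e k)) + ELT.t (P.inner (e j) (e k)) ≤
      ELT.t (P.inner (e j) (e j)) + ELT.t (P.inner (e k) (e k)) := by
  by_cases hjk : j = k
  · subst hjk; exact le_refl _
  obtain ⟨α, dj, hDj, hdjre, hdjim⟩ := diag P j
  obtain ⟨β, dk, hDk, hdkre, hdkim⟩ := diag P k
  cases hG : P.inner (e j) (e k) with
  | bot => simp [ELT.t, hDj, hDk]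
  | elt c l =>
    rw [hDj, hDk]
    show ((c : WithBot ℝ) + c ≤ (α : WithBot ℝ) + β)
    rw [← WithBot.coe_add, ← WithBot.coe_add, WithBot.coe_le_coe]
    by_contra hcon
    push_neg at hcon
    -- hcon : α + β < c + c
    set t₀ : ℝ := (α - β) / 2 with ht₀
    set μ : ℂ := if l = 0 then 1 else -l with hμ
    have hμne : μ ≠ 0 := by
      rw [hμ]; split_ifs with h
      · exact one_ne_zero
      · exact neg_ne_zero.mpr h
    set a : R := ELT.elt 0 1 with ha
    set b : R := ELT.elt t₀ μ with hb
    set w : Fin n → R := fun i => a * e j i + b * e k i with hw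
    -- compute inner w w
    have hGkj : P.inner (e k) (e j) = ELT.elt c (starRingEnd ℂ l) := by
      rw [P.conj_symm (e j) (e k), hG]; rfl
    have h1 : P.inner w w = a * P.inner (e j) w + b * P.inner (e k) w := P.linear a b (e j) (e k) w
    have h2 : P.inner w (e j) = a * ELT.elt α dj + b * ELT.elt c (starRingEnd ℂ l) := by
      rw [hw, P.linear a b (e j) (e k) (e j), hDj, hGkj]
    have h3 : P.inner w (e k) = a * ELT.elt c l + b * ELT.elt β dk := by
      rw [hw, P.linear a b (e j) (e k) (e k), hG, hDk]
    have hconjdj : starRingEnd ℂ dj = dj := by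
      apply Complex.ext <;> simp [hdjim]
    have hconjdk : starRingEnd ℂ dk = dk := by
      apply Complex.ext <;> simp [hdkim]
    have h4 : P.inner (e j) w = ELT.elt α dj + ELT.elt (t₀ + c) (starRingEnd ℂ μ * l) := by
      rw [P.conj_symm w (e j), h2, econj_add, econj_mul, econj_mul, ha, hb]
      show ELT.elt 0 (starRingEnd ℂ 1) * _ + ELT.elt t₀ (starRingEnd ℂ μ) * _ = _
      rw [map_one, one_mul']
      show econj _ + ELT.elt t₀ _ * econj _ = _
      simp only [econj, hconjdj, RingHomInvPair.comp_apply_eq, elt_mul]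
    have h5 : P.inner (e k) w = ELT.elt c (starRingEnd ℂ l) + ELT.elt (t₀ + β) (starRingEnd ℂ μ * dk) := by
      rw [P.conj_symm w (e k), h3, econj_add, econj_mul, econj_mul, ha, hb]
      show ELT.elt 0 (starRingEnd ℂ 1) * _ + ELT.elt t₀ (starRingEnd ℂ μ) * _ = _
      rw [map_one, one_mul']
      show econj _ + ELT.elt t₀ _ * econj _ = _
      simp only [econj, hconjdk, elt_mul]
    -- tangible comparisons
    have hc1 : α < t₀ + c := by rw [ht₀]; linarith
    have hc2 : c > t₀ + β := by rw [ht₀] at *; linarith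
    have h6 : P.inner (e j) w = ELT.elt (t₀ + c) (starRingEnd ℂ μ * l) := by
      rw [h4, add_lt _ _ _ _ hc1]
    have h7 : P.inner (e k) w = ELT.elt c (starRingEnd ℂ l) := by
      rw [h5, add_gt _ _ _ _ hc2]
    have h8 : P.inner w w = ELT.elt (t₀ + c) (starRingEnd ℂ μ * l + μ * starRingEnd ℂ l) := by
      rw [h1, h6, h7, ha, hb, one_mul', elt_mul, add_eq]
    have hwtang : ∀ i, TangibleOrBot (w i) := by
      intro i
      by_cases hij : i = j
      · right
        have : w i = ELT.elt 0 1 := by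
          have hik : i ≠ k := by rw [hij]; exact hjk
          simp [hw, e, hij, hik, hjk, ha, hb, mul_one', mul_bot, add_bot]
        rw [this]; simp [ELT.s]
      · by_cases hik : i = k
        · right
          have : w i = ELT.elt t₀ μ := by
            have hkj : k ≠ j := fun h => hjk h.symm
            simp [hw, e, hij, hik, hkj, ha, hb, mul_one', mul_bot, bot_add]
          rw [this]; simpa [ELT.s] using hμne
        · left
          simp [hw, e, hij, hik, mul_bot, add_bot]
    by_cases hl : l = 0
    · -- ghost cross term: contradict definiteness
      have hs0 : ELT.s (P.inner w w) = 0 := by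
        rw [h8, ELT.s, hl]; simp
      have := (P.definite w hwtang).mp hs0
      have hwj := congrFun this j
      have hwj2 : w j = ELT.elt 0 1 := by
        have hjk' : (j : Fin n) ≠ k := hjk
        simp [hw, e, hjk', ha, hb, mul_one', mul_bot, add_bot]
      rw [hwj2] at hwj
      exact absurd hwj (by simp)
    · -- tangible cross term: contradict layer nonnegativity
      have hre := (P.layer_nonneg w).1
      rw [h8, ELT.s] at hre
      have hμl : μ = -l := by rw [hμ, if_neg hl]
      rw [hμl] at hre
      have hsq : 0 < Complex.normSq l := Complex.normSq_pos.mpr hl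
      simp only [map_neg, neg_mul, mul_neg, Complex.add_re, Complex.neg_re,
        Complex.mul_re, Complex.conj_re, Complex.conj_im] at hre
      rw [Complex.normSq_apply] at hsq
      nlinarith [hre, hsq]

end ELTCS
namespace ELTCS
open ELT

variable {n : ℕ} (P : ELTInnerProduct n)

lemma t_inner_comm (x y : Fin n → R) : ELT.t (P.inner x y) = ELT.t (P.inner y x) := by
  rw [P.conj_symm y x, t_econj]

lemma lower_bound (x : Fin n → R) (j : Fin n) :
    ELT.t (x j) + (ELT.t (x j) + ELT.t (P.inner (e j) (e j))) ≤ ELT.t (P.inner x x) := by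
  have h1 : ELT.t (coeffs P x x j.val) ≤ ELT.t (P.inner x x) := by
    rw [expand P x x]
    exact t_le_S _ n j.val j.isLt
  rw [coeffs, dif_pos j.isLt] at h1
  simp only [Fin.eta] at h1
  rw [t_mul] at h1
  refine le_trans ?_ h1
  refine add_le_add (le_refl _) ?_
  rw [t_inner_comm P (e j) x]
  have h2 : ELT.t (coeffs P x (e j) j.val) ≤ ELT.t (P.inner x (e j)) := by
    rw [expand P x (e j)]
    exact t_le_S _ n j.val j.isLt
  rw [coeffs, dif_pos j.isLt] at h2
  simp only [Fin.eta] at h2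
  rw [t_mul] at h2
  exact h2

end ELTCS

/-- The ELT Cauchy–Schwarz inequality: `t(⟨u,v⟩²) ≤ t(⟨u,u⟩⋅⟨v,v⟩)`. -/
theorem stmt15 {n : ℕ} (P : ELTInnerProduct n) (u v : Fin n → ELT ℝ ℂ) :
    ELT.t (P.inner u v * P.inner u v) ≤ ELT.t (P.inner u u * P.inner v v) := by
  open ELTCS in
  rw [t_mul, t_mul]
  rcases S_witness (coeffs P u v) n with h | ⟨j, hj, hje⟩
  · rw [expand P u v, h]
    simp
  · have hp : ELT.t (P.inner u v) = ELT.t (coeffs P u v j) := by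
      rw [expand P u v]; exact hje
    rw [coeffs, dif_pos hj, t_mul] at hp
    set j' : Fin n := ⟨j, hj⟩ with hj'
    have hQ : ELT.t (P.inner (e j') v) = ELT.t (P.inner v (e j')) := t_inner_comm P _ _
    rcases S_witness (coeffs P v (e j')) n with h2 | ⟨k, hk, hke⟩
    · rw [hp, hQ, expand P v (e j'), h2]
      simp
    · have hq : ELT.t (P.inner v (e j')) = ELT.t (coeffs P v (e j') k) := by
        rw [expand P v (e j')]; exact hke
      rw [coeffs, dif_pos hk, t_mul] at hq
      set k' : Fin n := ⟨k, hk⟩ with hk'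
      rw [hp, hQ, hq]
      have hA := lower_bound P u j'
      have hB := lower_bound P v k'
      have hpair := pair P k' j'
      set x1 := ELT.t (u j') with hx1
      set x2 := ELT.t (v k') with hx2
      set g := ELT.t (P.inner (e k') (e j')) with hg
      set dj := ELT.t (P.inner (e j') (e j')) with hdj
      set dk := ELT.t (P.inner (e k') (e k')) with hdk
      calc (x1 + (x2 + g)) + (x1 + (x2 + g))
          = ((x1 + x1) + (x2 + x2)) + (g + g) := by abel
        _ ≤ ((x1 + x1) + (x2 + x2)) + (dk + dj) := add_le_add (le_refl _) hpair
        _ = (x1 + (x1 + dj)) + (x2 + (x2 + dk)) := by abel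
        _ ≤ ELT.t (P.inner u u) + ELT.t (P.inner v v) := add_le_add hA hB
end
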